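/- arXiv:2312.17131 — 8 statements merged into one kernel-verified Lean document; each statement's English description precedes it below -/
import Mathlib

section
/- The function g₁(b) = h₁(b)/h₁'(b) is strictly increasing on (0,∞), satisfies lim_{b↓0} g₁(b) = 0, and lim_{b↑∞} g₁(b) = 1/θ₊. -/
open Real Filter Set

/-- Positive root θ₊ of (σ²/2)r² + ηr − δ = 0. -/
noncomputable def thetaP (σ η δ : ℝ) : ℝ := (-η + Real.sqrt (η ^ 2 + 2 * σ ^ 2 * δ)) / σ ^ 2

/-- Negative root θ₋ of (σ²/2)r² + ηr − δ = 0. -/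
noncomputable def thetaM (σ η δ : ℝ) : ℝ := (-η - Real.sqrt (η ^ 2 + 2 * σ ^ 2 * δ)) / σ ^ 2

/-- h₁(x) = e^{θ₊x} − e^{θ₋x}. -/
noncomputable def h1 (σ η δ : ℝ) (x : ℝ) : ℝ :=
  Real.exp (thetaP σ η δ * x) - Real.exp (thetaM σ η δ * x)

/-- h₁'(x) = θ₊e^{θ₊x} − θ₋e^{θ₋x}. -/
noncomputable def h1' (σ η δ : ℝ) (x : ℝ) : ℝ :=
  thetaP σ η δ * Real.exp (thetaP σ η δ * x) - thetaM σ η δ * Real.exp (thetaM σ η δ * x)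

/-- g₁(b) = h₁(b)/h₁'(b). -/
noncomputable def g1 (σ η δ : ℝ) (b : ℝ) : ℝ := h1 σ η δ b / h1' σ η δ b

theorem g1_strictMonoOn_and_limits (σ η δ : ℝ) (hσ : 0 < σ) (hη : 0 < η) (hδ : 0 < δ) :
    StrictMonoOn (g1 σ η δ) (Set.Ioi 0) ∧
    Tendsto (g1 σ η δ) (nhdsWithin 0 (Set.Ioi 0)) (nhds 0) ∧
    Tendsto (g1 σ η δ) atTop (nhds (1 / thetaP σ η δ)) := by
  have hσ2 : (0:ℝ) < σ ^ 2 := by positivity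
  have hs : η < Real.sqrt (η ^ 2 + 2 * σ ^ 2 * δ) := by
    have h : η = Real.sqrt (η ^ 2) := by rw [Real.sqrt_sq hη.le]
    nth_rewrite 1 [h]
    apply Real.sqrt_lt_sqrt (by positivity)
    nlinarith
  set a := thetaP σ η δ with ha_def
  set c := thetaM σ η δ with hc_def
  have ha : 0 < a := by
    rw [ha_def, thetaP]; apply div_pos (by linarith) hσ2
  have hc : c < 0 := by
    rw [hc_def, thetaM]
    apply div_neg_of_neg_of_pos
      (by nlinarith [Real.sqrt_nonneg (η ^ 2 + 2 * σ ^ 2 * δ)]) hσ2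
  have hac : c < a := hc.trans ha
  have hd_eq : ∀ x : ℝ, h1' σ η δ x = a * Real.exp (a * x) - c * Real.exp (c * x) :=
    fun x => rfl
  have h1_eq : ∀ x : ℝ, h1 σ η δ x = Real.exp (a * x) - Real.exp (c * x) :=
    fun x => rfl
  -- h1' is positive everywhere
  have hd : ∀ x : ℝ, 0 < h1' σ η δ x := by
    intro x
    rw [hd_eq]
    have p1 : 0 < a * Real.exp (a * x) := by positivity
    have p2 : c * Real.exp (c * x) < 0 := mul_neg_of_neg_of_pos hc (Real.exp_pos _)
    linarith
  -- derivatives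
  have e1 : ∀ x : ℝ, HasDerivAt (fun x : ℝ => Real.exp (a * x)) (Real.exp (a * x) * a) x := by
    intro x
    simpa using ((hasDerivAt_id x).const_mul a).exp
  have e2 : ∀ x : ℝ, HasDerivAt (fun x : ℝ => Real.exp (c * x)) (Real.exp (c * x) * c) x := by
    intro x
    simpa using ((hasDerivAt_id x).const_mul c).exp
  have hderiv_h1 : ∀ x : ℝ, HasDerivAt (h1 σ η δ) (h1' σ η δ x) x := by
    intro x
    have := (e1 x).sub (e2 x)
    have hfun : h1 σ η δ = fun x : ℝ => Real.exp (a * x) - Real.exp (c * x) :=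
      funext h1_eq
    rw [hfun, hd_eq]
    refine this.congr_deriv ?_
    ring
  have hderiv_h1' : ∀ x : ℝ, HasDerivAt (h1' σ η δ)
      (a * (Real.exp (a * x) * a) - c * (Real.exp (c * x) * c)) x := by
    intro x
    have hfun : h1' σ η δ = fun x : ℝ => a * Real.exp (a * x) - c * Real.exp (c * x) :=
      funext hd_eq
    rw [hfun]
    exact ((e1 x).const_mul a).sub ((e2 x).const_mul c)
  have hderiv_g1 : ∀ x : ℝ, HasDerivAt (g1 σ η δ)
      ((a - c) ^ 2 * (Real.exp (a * x) * Real.exp (c * x)) / (h1' σ η δ x) ^ 2) x := by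
    intro x
    have := (hderiv_h1 x).div (hderiv_h1' x) (hd x).ne'
    refine this.congr_deriv ?_
    rw [h1_eq, hd_eq]
    congr 1
    ring
  have hdiff : ∀ x : ℝ, DifferentiableAt ℝ (g1 σ η δ) x :=
    fun x => (hderiv_g1 x).differentiableAt
  have hderiv_pos : ∀ x : ℝ, 0 < deriv (g1 σ η δ) x := by
    intro x
    rw [(hderiv_g1 x).deriv]
    exact div_pos (mul_pos (pow_pos (by linarith) 2) (by positivity)) (pow_pos (hd x) 2)
  refine ⟨?_, ?_, ?_⟩
  · exact (strictMono_of_deriv_pos hderiv_pos).strictMonoOn _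
  · have hcont : ContinuousAt (g1 σ η δ) 0 := (hdiff 0).continuousAt
    have h0 : g1 σ η δ 0 = 0 := by
      simp [g1, h1]
    have := hcont.tendsto
    rw [h0] at this
    exact this.mono_left nhdsWithin_le_nhds
  · -- limit at infinity
    have heq : ∀ b : ℝ, g1 σ η δ b =
        (1 - Real.exp ((c - a) * b)) / (a - c * Real.exp ((c - a) * b)) := by
      intro b
      have hE : (0:ℝ) < Real.exp (a * b) := Real.exp_pos _
      have hca : Real.exp ((c - a) * b) = Real.exp (c * b) / Real.exp (a * b) := by
        rw [eq_div_iff hE.ne', ← Real.exp_add]; ring_nf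
      have hD := hd b
      rw [hd_eq] at hD
      have hD2 : (0:ℝ) < a - c * Real.exp ((c - a) * b) := by
        have : c * Real.exp ((c - a) * b) < 0 :=
          mul_neg_of_neg_of_pos hc (Real.exp_pos _)
        linarith
      rw [g1, h1_eq, hd_eq, hca]
      rw [div_eq_div_iff hD.ne' (by rw [hca] at hD2; exact hD2.ne')]
      field_simp
    have htend : Tendsto (fun b : ℝ => Real.exp ((c - a) * b)) atTop (nhds 0) := by
      apply Real.tendsto_exp_atBot.comp
      exact Tendsto.const_mul_atTop_of_neg (by linarith : c - a < 0) tendsto_id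
    have hnum : Tendsto (fun b : ℝ => 1 - Real.exp ((c - a) * b)) atTop (nhds 1) := by
      have := (tendsto_const_nhds (x := (1:ℝ)) (f := atTop)).sub htend
      simpa using this
    have hden : Tendsto (fun b : ℝ => a - c * Real.exp ((c - a) * b)) atTop (nhds a) := by
      have := (tendsto_const_nhds (x := a) (f := atTop)).sub (htend.const_mul c)
      simpa using this
    have hfin := hnum.div hden ha.ne'
    refine Tendsto.congr (fun b => (heq b).symm) ?_
    exact hfin
end

section
/- For every γ > σ²δ²/(2η²) there exists a unique b > 0 such that g₁(b) = f₁(γ). (In particular 0 < f₁(γ) < 1/θ₊ for such γ, where θ₊ < δ/η.) -/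
open Real Filter Set

/-- f₁(γ) = ηγ/(δ(δ+γ)) − σ²/(η + √(η² + 2σ²(δ+γ))). -/
noncomputable def f1 (σ η δ : ℝ) (γ : ℝ) : ℝ :=
  η * γ / (δ * (δ + γ)) - σ ^ 2 / (η + Real.sqrt (η ^ 2 + 2 * σ ^ 2 * (δ + γ)))

/-- Key existence/uniqueness lemma in cleared form. -/
lemma key_aux (a c v : ℝ) (ha : 0 < a) (hc : c < 0) (hv0 : 0 < v) (hv1 : v * a < 1) :
    ∃! b : ℝ, 0 < b ∧ (1 - v * a) * Real.exp (a * b) = (1 - v * c) * Real.exp (c * b) := by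
  have h1a : 0 < 1 - v * a := by linarith
  have h1c : 1 < 1 - v * c := by nlinarith
  have hac : 0 < a - c := by linarith
  set R := (1 - v * c) / (1 - v * a) with hR
  have hRpos : 0 < R := by positivity
  have hR1 : 1 < R := by
    rw [hR, lt_div_iff₀ h1a]; nlinarith [mul_pos hv0 ha]
  have hlog : 0 < Real.log R := Real.log_pos hR1
  refine ⟨Real.log R / (a - c), ⟨by positivity, ?_⟩, ?_⟩
  · set b := Real.log R / (a - c) with hb
    have he : Real.exp ((a - c) * b) = R := by
      rw [hb, mul_div_cancel₀ _ (ne_of_gt hac), Real.exp_log hRpos]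
    have hsplit : Real.exp (a * b) = Real.exp (c * b) * R := by
      rw [← he, ← Real.exp_add]; ring_nf
    rw [hsplit, hR]
    field_simp
  · rintro b' ⟨hb', heq⟩
    have hcb := Real.exp_pos (c * b')
    have hsplit : Real.exp (a * b') = Real.exp (c * b') * Real.exp ((a - c) * b') := by
      rw [← Real.exp_add]; ring_nf
    have hE : Real.exp ((a - c) * b') = R := by
      rw [hsplit] at heq
      rw [hR, eq_div_iff (ne_of_gt h1a)]
      apply mul_left_cancel₀ (ne_of_gt hcb)
      linear_combination heq
    have := congrArg Real.log hE
    rw [Real.log_exp] at this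
    field_simp
    linarith [this, mul_comm (a - c) b']

set_option maxHeartbeats 1000000 in
theorem exists_unique_barrier (σ η δ : ℝ) (hσ : 0 < σ) (hη : 0 < η) (hδ : 0 < δ) :
    (∀ γ : ℝ, σ ^ 2 * δ ^ 2 / (2 * η ^ 2) < γ →
      (0 < f1 σ η δ γ ∧ f1 σ η δ γ < 1 / thetaP σ η δ) ∧
      (∃! b : ℝ, 0 < b ∧ g1 σ η δ b = f1 σ η δ γ)) ∧
    thetaP σ η δ < δ / η := by
  have hσ2 : (0:ℝ) < σ ^ 2 := by positivity
  set s0 := Real.sqrt (η ^ 2 + 2 * σ ^ 2 * δ) with hs0def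
  have hs0sq : s0 ^ 2 = η ^ 2 + 2 * σ ^ 2 * δ := Real.sq_sqrt (by positivity)
  have hs0 : η < s0 := by
    nlinarith [hs0sq, Real.sqrt_nonneg (η ^ 2 + 2 * σ ^ 2 * δ), mul_pos hσ2 hδ]
  set a := thetaP σ η δ with hadef
  set c := thetaM σ η δ with hcdef
  have haq : a * σ ^ 2 = s0 - η := by
    rw [hadef]; unfold thetaP; rw [← hs0def]; field_simp; ring
  have hcq : c * σ ^ 2 = -s0 - η := by
    rw [hcdef]; unfold thetaM; rw [← hs0def]; field_simp; ring
  have ha : 0 < a := by nlinarith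
  have hc : c < 0 := by nlinarith
  have hainv : 1 / a = (s0 + η) / (2 * δ) := by
    have haval : a = (s0 - η) / σ ^ 2 := by
      field_simp at haq ⊢; linarith
    rw [haval, one_div_div, div_eq_div_iff (by linarith) (by linarith)]
    linear_combination (-1 : ℝ) * hs0sq
  constructor
  · intro γ hγ
    have hγ0 : 0 < γ := lt_trans (by positivity) hγ
    have hδγ : 0 < δ + γ := by linarith
    have h2 : σ ^ 2 * δ ^ 2 < 2 * η ^ 2 * γ := by
      rw [div_lt_iff₀ (by positivity)] at hγ; linarith [hγ]
    set s := Real.sqrt (η ^ 2 + 2 * σ ^ 2 * (δ + γ)) with hsdef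
    have hssq : s ^ 2 = η ^ 2 + 2 * σ ^ 2 * (δ + γ) := Real.sq_sqrt (by positivity)
    have hs : η < s := by
      nlinarith [hssq, Real.sqrt_nonneg (η ^ 2 + 2 * σ ^ 2 * (δ + γ)), mul_pos hσ2 hδγ]
    have hval : f1 σ η δ γ = η * γ / (δ * (δ + γ)) - (s - η) / (2 * (δ + γ)) := by
      unfold f1; rw [← hsdef]
      congr 1
      rw [div_eq_div_iff (by linarith) (by positivity)]
      linear_combination (-1 : ℝ) * hssq
    have hssq2 : (δ * s) ^ 2 = δ ^ 2 * (η ^ 2 + 2 * σ ^ 2 * (δ + γ)) := by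
      rw [mul_pow, hssq]
    have h2γ : σ ^ 2 * δ ^ 2 * γ < 2 * η ^ 2 * γ * γ := mul_lt_mul_of_pos_right h2 hγ0
    have h2δ : σ ^ 2 * δ ^ 2 * δ < 2 * η ^ 2 * γ * δ := mul_lt_mul_of_pos_right h2 hδ
    have key1 : δ * s < δ * η + 2 * η * γ := by
      have hpos : 0 < δ * η + 2 * η * γ + δ * s := by
        have := mul_pos hδ (hη.trans hs); nlinarith [mul_pos hδ hη, mul_pos hη hγ0]
      nlinarith [hssq2, h2γ, h2δ, hpos]
    have key2 : η * γ < δ * s + s0 * δ + s0 * γ := by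
      nlinarith [mul_pos hδ (hη.trans hs), mul_pos hδ (hη.trans hs0),
        mul_lt_mul_of_pos_right hs0 hγ0]
    have hv0 : 0 < f1 σ η δ γ := by
      rw [hval, sub_pos, div_lt_div_iff₀ (by positivity) (by positivity)]
      nlinarith [mul_lt_mul_of_pos_right key1 hδγ]
    have hv1 : f1 σ η δ γ < 1 / a := by
      rw [hval, hainv, div_sub_div _ _ (by positivity) (by positivity),
        div_lt_div_iff₀ (by positivity) (by positivity)]
      nlinarith [mul_lt_mul_of_pos_right key2 (by positivity : (0:ℝ) < 2 * δ * (δ + γ))]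
    refine ⟨⟨hv0, hv1⟩, ?_⟩
    set v := f1 σ η δ γ with hvdef
    have hva : v * a < 1 := by
      rw [lt_div_iff₀ ha] at hv1; linarith
    have hh1' : ∀ x : ℝ, 0 < h1' σ η δ x := by
      intro x
      unfold h1'; rw [← hadef, ← hcdef]
      nlinarith [Real.exp_pos (a * x), Real.exp_pos (c * x)]
    have hiff : ∀ b : ℝ, (0 < b ∧ g1 σ η δ b = v) ↔
        (0 < b ∧ (1 - v * a) * Real.exp (a * b) = (1 - v * c) * Real.exp (c * b)) := by
      intro b
      apply and_congr_right
      intro _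
      unfold g1
      rw [div_eq_iff (ne_of_gt (hh1' b))]
      unfold h1 h1'
      rw [← hadef, ← hcdef]
      constructor <;> intro h <;> linear_combination h
    rw [show (∃! b, 0 < b ∧ g1 σ η δ b = v) ↔ _ from existsUnique_congr hiff]
    exact key_aux a c v ha hc hv0 hva
  · rw [lt_div_iff₀ hη]
    nlinarith [hs0sq, hs0]
end

section
/- The function v_{γ,b} defined by v_{γ,b}(x) = c_{1,1}(b)·h₁(x) for 0 ≤ x ≤ b, and v_{γ,b}(x) = c_{1,2}(b)·e^{λ_γ(x−b)} + (γ/(γ+δ))·(x − b + c_{1,1}(b)h₁(b) + η/(γ+δ)) for x ≥ b, is twice continuously differentiable on (0,∞), satisfies v_{γ,b}(0) = 0, satisfies (σ²/2)v''(x) + ηv'(x) − δv(x) = 0 for all x ∈ (0,b), and satisfies (σ²/2)v''(x) + ηv'(x) − δv(x) + γ(x − b + v(b) − v(x)) = 0 for all x ∈ (b,∞). -/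
open Real Filter Set

/-- λ_γ, the negative root of (σ²/2)r² + ηr − (δ+γ) = 0. -/
noncomputable def lamGamma (σ η δ γ : ℝ) : ℝ :=
  (-η - Real.sqrt (η ^ 2 + 2 * σ ^ 2 * (δ + γ))) / σ ^ 2

/-- c_{1,1}(b). -/
noncomputable def c11 (σ η δ γ b : ℝ) : ℝ :=
  ((γ / (γ + δ)) * (1 - η * lamGamma σ η δ γ / (γ + δ))) /
    (h1' σ η δ b - (δ * lamGamma σ η δ γ / (γ + δ)) * h1 σ η δ b)

/-- c_{1,2}(b). -/
noncomputable def c12 (σ η δ γ b : ℝ) : ℝ :=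
  (1 / (γ + δ)) * (δ * c11 σ η δ γ b * h1 σ η δ b - γ * η / (γ + δ))

/-- The candidate value function v_{γ,b}. -/
noncomputable def vGammaB (σ η δ γ b : ℝ) (x : ℝ) : ℝ :=
  if x ≤ b then c11 σ η δ γ b * h1 σ η δ x
  else c12 σ η δ γ b * Real.exp (lamGamma σ η δ γ * (x - b)) +
    (γ / (γ + δ)) * (x - b + c11 σ η δ γ b * h1 σ η δ b + η / (γ + δ))


lemma pw_hasDerivAt {f g f' g' : ℝ → ℝ} {b : ℝ}
    (hf : ∀ x, HasDerivAt f (f' x) x) (hg : ∀ x, HasDerivAt g (g' x) x)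
    (h0 : f b = g b) (h1 : f' b = g' b)
    (hf' : Continuous f') (hg' : Continuous g') :
    ∀ x, HasDerivAt (fun y => if y ≤ b then f y else g y)
      (if x ≤ b then f' x else g' x) x := by
  have hne : ∀ y, y ≠ b → HasDerivAt (fun y => if y ≤ b then f y else g y)
      ((fun z => if z ≤ b then f' z else g' z) y) y := by
    intro y hy
    rcases hy.lt_or_gt with h | h
    · simp only [if_pos h.le]
      exact (hf y).congr_of_eventuallyEq (by
        filter_upwards [Iio_mem_nhds h] with z hz
        simp [if_pos hz.out.le])
    · simp only [if_neg (not_le.2 h)]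
      exact (hg y).congr_of_eventuallyEq (by
        filter_upwards [Ioi_mem_nhds h] with z hz
        simp [if_neg (not_le.2 hz.out)])
  intro x
  rcases eq_or_ne x b with rfl | hx
  · have hfc : Continuous f := continuous_iff_continuousAt.2 fun z => (hf z).differentiableAt.continuousAt
    have hgc : Continuous g := continuous_iff_continuousAt.2 fun z => (hg z).differentiableAt.continuousAt
    have hPc : Continuous (fun y => if y ≤ x then f y else g y) :=
      hfc.if_le hgc continuous_id continuous_const (fun z hz => by subst hz; exact h0)
    have hP'c : Continuous (fun z => if z ≤ x then f' z else g' z) :=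
      hf'.if_le hg' continuous_id continuous_const (fun z hz => by subst hz; exact h1)
    simpa using hasDerivAt_of_hasDerivAt_of_ne hne hPc.continuousAt hP'c.continuousAt
  · exact hne x hx

theorem vGammaB_solves_NLPDS (σ η δ γ b : ℝ)
    (hσ : 0 < σ) (hη : 0 < η) (hδ : 0 < δ) (hγ : 0 < γ) (hb : 0 < b) :
    ContDiffOn ℝ 2 (vGammaB σ η δ γ b) (Set.Ioi 0) ∧
    vGammaB σ η δ γ b 0 = 0 ∧
    (∀ x ∈ Set.Ioo 0 b,
      σ ^ 2 / 2 * deriv (deriv (vGammaB σ η δ γ b)) x +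
        η * deriv (vGammaB σ η δ γ b) x - δ * vGammaB σ η δ γ b x = 0) ∧
    (∀ x ∈ Set.Ioi b,
      σ ^ 2 / 2 * deriv (deriv (vGammaB σ η δ γ b)) x +
        η * deriv (vGammaB σ η δ γ b) x - δ * vGammaB σ η δ γ b x +
        γ * (x - b + vGammaB σ η δ γ b b - vGammaB σ η δ γ b x) = 0) := by
  have hγδ : (0:ℝ) < γ + δ := by linarith
  have hγδ' : γ + δ ≠ 0 := ne_of_gt hγδ
  have hσ2 : (0:ℝ) < σ ^ 2 := by positivity
  have hσ2' : (σ:ℝ) ^ 2 ≠ 0 := ne_of_gt hσ2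
  have hs2 : Real.sqrt (η ^ 2 + 2 * σ ^ 2 * δ) ^ 2 = η ^ 2 + 2 * σ ^ 2 * δ :=
    Real.sq_sqrt (by positivity)
  have hsg2 : Real.sqrt (η ^ 2 + 2 * σ ^ 2 * (δ + γ)) ^ 2 = η ^ 2 + 2 * σ ^ 2 * (δ + γ) :=
    Real.sq_sqrt (by positivity)
  have hθp : σ ^ 2 / 2 * thetaP σ η δ ^ 2 + η * thetaP σ η δ - δ = 0 := by
    unfold thetaP; field_simp; rw [show η ^ 2 + σ ^ 2 * 2 * δ = η ^ 2 + 2 * σ ^ 2 * δ by ring]; linear_combination hs2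
  have hθm : σ ^ 2 / 2 * thetaM σ η δ ^ 2 + η * thetaM σ η δ - δ = 0 := by
    unfold thetaM; field_simp; rw [show η ^ 2 + σ ^ 2 * 2 * δ = η ^ 2 + 2 * σ ^ 2 * δ by ring]; linear_combination hs2
  have hlamr : σ ^ 2 / 2 * lamGamma σ η δ γ ^ 2 + η * lamGamma σ η δ γ - (δ + γ) = 0 := by
    unfold lamGamma; field_simp; rw [show η ^ 2 + σ ^ 2 * 2 * (δ + γ) = η ^ 2 + 2 * σ ^ 2 * (δ + γ) by ring]; linear_combination hsg2
  have hθppos : 0 < thetaP σ η δ := by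
    have h1 : η < Real.sqrt (η ^ 2 + 2 * σ ^ 2 * δ) := (Real.lt_sqrt hη.le).2 (by nlinarith)
    exact div_pos (by linarith) hσ2
  have hθmneg : thetaM σ η δ < 0 := by
    have h1 : 0 < Real.sqrt (η ^ 2 + 2 * σ ^ 2 * δ) := Real.sqrt_pos.2 (by positivity)
    exact div_neg_of_neg_of_pos (by linarith) hσ2
  have hlamneg : lamGamma σ η δ γ < 0 := by
    have h1 : 0 < Real.sqrt (η ^ 2 + 2 * σ ^ 2 * (δ + γ)) := Real.sqrt_pos.2 (by positivity)
    exact div_neg_of_neg_of_pos (by linarith) hσ2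
  have hH : 0 < h1 σ η δ b := by
    have : thetaM σ η δ * b < thetaP σ η δ * b := by nlinarith
    exact sub_pos.2 (Real.exp_lt_exp.2 this)
  have hH1 : 0 < h1' σ η δ b := by
    have h1 : 0 < thetaP σ η δ * Real.exp (thetaP σ η δ * b) :=
      mul_pos hθppos (Real.exp_pos _)
    have h2 : thetaM σ η δ * Real.exp (thetaM σ η δ * b) < 0 :=
      mul_neg_of_neg_of_pos hθmneg (Real.exp_pos _)
    unfold h1'; linarith
  have hD : 0 < h1' σ η δ b - δ * lamGamma σ η δ γ / (γ + δ) * h1 σ η δ b := by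
    have h2 : δ * lamGamma σ η δ γ / (γ + δ) * h1 σ η δ b < 0 :=
      mul_neg_of_neg_of_pos (div_neg_of_neg_of_pos (by nlinarith) hγδ) hH
    linarith
  have hc11m : c11 σ η δ γ b *
      (h1' σ η δ b - δ * lamGamma σ η δ γ / (γ + δ) * h1 σ η δ b) =
      γ / (γ + δ) * (1 - η * lamGamma σ η δ γ / (γ + δ)) := by
    rw [c11]; exact div_mul_cancel₀ _ (ne_of_gt hD)
  -- the two pieces and their derivatives
  set F : ℝ → ℝ := fun y => c11 σ η δ γ b * h1 σ η δ y with hF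
  set G : ℝ → ℝ := fun y => c12 σ η δ γ b * Real.exp (lamGamma σ η δ γ * (y - b)) +
    (γ / (γ + δ)) * (y - b + c11 σ η δ γ b * h1 σ η δ b + η / (γ + δ)) with hG
  set F1 : ℝ → ℝ := fun y => c11 σ η δ γ b * h1' σ η δ y with hF1
  set G1 : ℝ → ℝ := fun y => c12 σ η δ γ b *
    (lamGamma σ η δ γ * Real.exp (lamGamma σ η δ γ * (y - b))) + γ / (γ + δ) with hG1
  set F2 : ℝ → ℝ := fun y => c11 σ η δ γ b *
    (thetaP σ η δ ^ 2 * Real.exp (thetaP σ η δ * y) -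
     thetaM σ η δ ^ 2 * Real.exp (thetaM σ η δ * y)) with hF2
  set G2 : ℝ → ℝ := fun y => c12 σ η δ γ b *
    (lamGamma σ η δ γ ^ 2 * Real.exp (lamGamma σ η δ γ * (y - b))) with hG2
  have hVeq : vGammaB σ η δ γ b = fun y => if y ≤ b then F y else G y := rfl
  -- derivative facts
  have hexp : ∀ (a x : ℝ), HasDerivAt (fun y => Real.exp (a * y)) (a * Real.exp (a * x)) x := by
    intro a x
    simpa [mul_comm, Function.comp_def] using (Real.hasDerivAt_exp (a * x)).comp x ((hasDerivAt_id x).const_mul a)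
  have hexpb : ∀ (a x : ℝ), HasDerivAt (fun y => Real.exp (a * (y - b)))
      (a * Real.exp (a * (x - b))) x := by
    intro a x
    simpa [mul_comm, Function.comp_def] using (Real.hasDerivAt_exp (a * (x - b))).comp x
      (((hasDerivAt_id x).sub_const b).const_mul a)
  have hdF : ∀ x, HasDerivAt F (F1 x) x := by
    intro x
    have := ((hexp (thetaP σ η δ) x).sub (hexp (thetaM σ η δ) x)).const_mul (c11 σ η δ γ b)
    simpa [hF, hF1, h1, h1'] using this
  have hdF1 : ∀ x, HasDerivAt F1 (F2 x) x := by
    intro x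
    have h := (((hexp (thetaP σ η δ) x).const_mul (thetaP σ η δ)).sub
      ((hexp (thetaM σ η δ) x).const_mul (thetaM σ η δ))).const_mul (c11 σ η δ γ b)
    have hfun : F1 = fun y => c11 σ η δ γ b * (thetaP σ η δ * Real.exp (thetaP σ η δ * y) -
        thetaM σ η δ * Real.exp (thetaM σ η δ * y)) := by
      funext y; simp [hF1, h1']
    rw [hfun, hF2]
    refine h.congr_deriv ?_
    beta_reduce; ring
  have hdG : ∀ x, HasDerivAt G (G1 x) x := by
    intro x
    have h1d := (hexpb (lamGamma σ η δ γ) x).const_mul (c12 σ η δ γ b)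
    have h2d : HasDerivAt (fun y => (γ / (γ + δ)) *
        (y - b + c11 σ η δ γ b * h1 σ η δ b + η / (γ + δ))) (γ / (γ + δ)) x := by
      simpa using ((((hasDerivAt_id x).sub_const b).add_const
        (c11 σ η δ γ b * h1 σ η δ b)).add_const (η / (γ + δ))).const_mul (γ / (γ + δ))
    exact h1d.add h2d
  have hdG1 : ∀ x, HasDerivAt G1 (G2 x) x := by
    intro x
    have h := (((hexpb (lamGamma σ η δ γ) x).const_mul (lamGamma σ η δ γ)).const_mul
      (c12 σ η δ γ b)).add_const (γ / (γ + δ))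
    rw [hG1, hG2]
    refine h.congr_deriv ?_
    beta_reduce; ring
  -- junction matching
  have hmatch0 : F b = G b := by
    simp only [hF, hG, c12, sub_self, mul_zero, Real.exp_zero, mul_one]
    field_simp
    ring
  have hmatch1 : F1 b = G1 b := by
    simp only [hF1, hG1, c12, sub_self, mul_zero, Real.exp_zero, mul_one]
    have hc : c11 σ η δ γ b * (h1' σ η δ b * (γ + δ) - δ * lamGamma σ η δ γ * h1 σ η δ b) *
        (γ + δ) = γ * (γ + δ - η * lamGamma σ η δ γ) := by
      have h := hc11m
      field_simp at h
      exact mul_right_cancel₀ hγδ' (by linear_combination (γ + δ) * h)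
    field_simp
    linear_combination hc
  -- the two ODEs
  have hODE1 : ∀ x, σ ^ 2 / 2 * F2 x + η * F1 x - δ * F x = 0 := by
    intro x
    simp only [hF, hF1, hF2, h1, h1']
    linear_combination (c11 σ η δ γ b * Real.exp (thetaP σ η δ * x)) * hθp -
      (c11 σ η δ γ b * Real.exp (thetaM σ η δ * x)) * hθm
  have hODE2 : ∀ x, σ ^ 2 / 2 * G2 x + η * G1 x - δ * G x +
      γ * (x - b + F b - G x) = 0 := by
    intro x
    simp only [hF, hG, hG1, hG2]
    field_simp
    linear_combination (2 * (γ + δ) ^ 2 * c12 σ η δ γ b *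
      Real.exp (lamGamma σ η δ γ * (x - b))) * hlamr
  have hmatch2 : F2 b = G2 b := by
    have e1 := hODE1 b
    have e2 := hODE2 b
    have key : σ ^ 2 / 2 * F2 b = σ ^ 2 / 2 * G2 b := by
      linear_combination e1 - e2 - η * hmatch1 + (δ + γ) * hmatch0
    exact mul_left_cancel₀ (by positivity : (σ:ℝ) ^ 2 / 2 ≠ 0) key
  -- continuity of derivatives
  have hF1c : Continuous F1 := by unfold F1; unfold h1'; fun_prop
  have hG1c : Continuous G1 := by unfold G1; fun_prop
  have hF2c : Continuous F2 := by unfold F2; fun_prop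
  have hG2c : Continuous G2 := by unfold G2; fun_prop
  -- assemble piecewise derivatives
  have hdV : ∀ x, HasDerivAt (vGammaB σ η δ γ b) (if x ≤ b then F1 x else G1 x) x := by
    rw [hVeq]; exact pw_hasDerivAt hdF hdG hmatch0 hmatch1 hF1c hG1c
  have hdP1 : ∀ x, HasDerivAt (fun y => if y ≤ b then F1 y else G1 y)
      (if x ≤ b then F2 x else G2 x) x :=
    pw_hasDerivAt hdF1 hdG1 hmatch1 hmatch2 hF2c hG2c
  have hderiv1 : deriv (vGammaB σ η δ γ b) = fun y => if y ≤ b then F1 y else G1 y :=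
    funext fun x => (hdV x).deriv
  have hderiv2 : deriv (fun y => if y ≤ b then F1 y else G1 y) =
      fun y => if y ≤ b then F2 y else G2 y :=
    funext fun x => (hdP1 x).deriv
  have hP2c : Continuous (fun y => if y ≤ b then F2 y else G2 y) :=
    hF2c.if_le hG2c continuous_id continuous_const (fun z hz => by subst hz; exact hmatch2)
  have hC1 : ContDiff ℝ 1 (fun y => if y ≤ b then F1 y else G1 y) :=
    contDiff_one_iff_deriv.2 ⟨fun x => (hdP1 x).differentiableAt, by rw [hderiv2]; exact hP2c⟩
  have hC : ContDiff ℝ 2 (vGammaB σ η δ γ b) := by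
    rw [show (2 : WithTop ℕ∞) = 1 + 1 by norm_num, contDiff_succ_iff_deriv]
    exact ⟨fun x => (hdV x).differentiableAt, by simp, by rw [hderiv1]; exact hC1⟩
  refine ⟨hC.contDiffOn, ?_, ?_, ?_⟩
  · show (if (0:ℝ) ≤ b then c11 σ η δ γ b * h1 σ η δ 0 else _) = 0
    rw [if_pos hb.le]
    simp [h1]
  · intro x hx
    rw [hderiv1, hderiv2]
    simp only [if_pos hx.2.le]
    have hVx : vGammaB σ η δ γ b x = F x := by rw [hVeq]; simp [if_pos hx.2.le]
    rw [hVx]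
    exact hODE1 x
  · intro x hx
    have hxb : ¬ x ≤ b := not_le.2 hx
    rw [hderiv1, hderiv2]
    simp only [if_neg hxb]
    have hVx : vGammaB σ η δ γ b x = G x := by rw [hVeq]; simp [if_neg hxb]
    have hVb : vGammaB σ η δ γ b b = F b := by rw [hVeq]; simp
    rw [hVx, hVb]
    exact hODE2 x
end

section
/- Let γ > σ²δ²/(2η²) and let b_γ > 0 be the unique solution of g₁(b_γ) = f₁(γ). Then the function v = v_{γ,b_γ} is increasing and concave on (0,∞), satisfies v'(b_γ) = 1, the ratio v'/v'' is decreasing on (0,∞), and lim_{x↓0} v'(x)/v''(x) = −σ²/(2η). Moreover, if μ ≥ 2η then for every x > 0, sup over u ∈ [0,1] and ξ ∈ [0,x] of { (1/2)σ²u²v''(x) + (η − (1−u)μ)v'(x) − δv(x) + γ(ξ + v(x−ξ) − v(x)) } equals 0. -/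
open Real Filter Set

namespace VGB

noncomputable def h1'' (σ η δ : ℝ) (x : ℝ) : ℝ :=
  (thetaP σ η δ) ^ 2 * Real.exp (thetaP σ η δ * x) -
    (thetaM σ η δ) ^ 2 * Real.exp (thetaM σ η δ * x)

variable {σ η δ γ b : ℝ}

lemma sqrt_gt (hσ : 0 < σ) (hη : 0 < η) (hδ : 0 < δ) :
    η < Real.sqrt (η ^ 2 + 2 * σ ^ 2 * δ) := by
  have h0 : (0:ℝ) < 2 * σ ^ 2 * δ := by positivity
  have h : η ^ 2 < η ^ 2 + 2 * σ ^ 2 * δ := by linarith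
  nlinarith [Real.sq_sqrt (by positivity : (0:ℝ) ≤ η ^ 2 + 2 * σ ^ 2 * δ),
    Real.sqrt_nonneg (η ^ 2 + 2 * σ ^ 2 * δ)]

lemma thetaP_pos (hσ : 0 < σ) (hη : 0 < η) (hδ : 0 < δ) : 0 < thetaP σ η δ := by
  have := sqrt_gt hσ hη hδ
  have h2 : (0:ℝ) < σ ^ 2 := by positivity
  unfold thetaP; exact div_pos (by linarith) h2

lemma thetaM_neg (hσ : 0 < σ) (hη : 0 < η) (hδ : 0 < δ) : thetaM σ η δ < 0 := by
  have := sqrt_gt hσ hη hδ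
  have h2 : (0:ℝ) < σ ^ 2 := by positivity
  unfold thetaM
  apply div_neg_of_neg_of_pos (by linarith) h2

lemma rootP (hσ : 0 < σ) (hη : 0 < η) (hδ : 0 < δ) :
    σ ^ 2 / 2 * thetaP σ η δ ^ 2 + η * thetaP σ η δ - δ = 0 := by
  have h2 : (σ:ℝ) ^ 2 ≠ 0 := by positivity
  have hs2 : Real.sqrt (η ^ 2 + 2 * σ ^ 2 * δ) ^ 2 = η ^ 2 + 2 * σ ^ 2 * δ :=
    Real.sq_sqrt (by positivity)
  unfold thetaP
  field_simp
  linear_combination Real.sq_sqrt (show (0:ℝ) ≤ η ^ 2 + σ ^ 2 * 2 * δ by positivity)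

lemma rootM (hσ : 0 < σ) (hη : 0 < η) (hδ : 0 < δ) :
    σ ^ 2 / 2 * thetaM σ η δ ^ 2 + η * thetaM σ η δ - δ = 0 := by
  have h2 : (σ:ℝ) ^ 2 ≠ 0 := by positivity
  have hs2 : Real.sqrt (η ^ 2 + 2 * σ ^ 2 * δ) ^ 2 = η ^ 2 + 2 * σ ^ 2 * δ :=
    Real.sq_sqrt (by positivity)
  unfold thetaM
  field_simp
  linear_combination Real.sq_sqrt (show (0:ℝ) ≤ η ^ 2 + σ ^ 2 * 2 * δ by positivity)

lemma theta_sum (hσ : 0 < σ) : thetaP σ η δ + thetaM σ η δ = -2 * η / σ ^ 2 := by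
  have h2 : (σ:ℝ) ^ 2 ≠ 0 := by positivity
  unfold thetaP thetaM
  field_simp
  ring

lemma theta_sq_lt (hσ : 0 < σ) (hη : 0 < η) (hδ : 0 < δ) :
    thetaP σ η δ ^ 2 < thetaM σ η δ ^ 2 := by
  have hp := thetaP_pos hσ hη hδ
  have hm := thetaM_neg hσ hη hδ
  have hsum : thetaP σ η δ + thetaM σ η δ < 0 := by
    rw [theta_sum hσ]
    have h2 : (0:ℝ) < σ ^ 2 := by positivity
    apply div_neg_of_neg_of_pos (by linarith) h2
  nlinarith

lemma lam_neg (hσ : 0 < σ) (hη : 0 < η) : lamGamma σ η δ γ < 0 := by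
  have h2 : (0:ℝ) < σ ^ 2 := by positivity
  unfold lamGamma
  apply div_neg_of_neg_of_pos _ h2
  have := Real.sqrt_nonneg (η ^ 2 + 2 * σ ^ 2 * (δ + γ))
  linarith

lemma rootL (hσ : 0 < σ) (hη : 0 < η) (hδ : 0 < δ) (hγ : 0 < γ) :
    σ ^ 2 / 2 * lamGamma σ η δ γ ^ 2 + η * lamGamma σ η δ γ - (δ + γ) = 0 := by
  have h2 : (σ:ℝ) ^ 2 ≠ 0 := by positivity
  have hs2 : Real.sqrt (η ^ 2 + 2 * σ ^ 2 * (δ + γ)) ^ 2 = η ^ 2 + 2 * σ ^ 2 * (δ + γ) :=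
    Real.sq_sqrt (by positivity)
  unfold lamGamma
  field_simp
  linear_combination Real.sq_sqrt (show (0:ℝ) ≤ η ^ 2 + σ ^ 2 * 2 * (δ + γ) by positivity)

lemma f1_eq (hσ : 0 < σ) (hη : 0 < η) (hδ : 0 < δ) (hγ : 0 < γ) :
    f1 σ η δ γ = 1 / lamGamma σ η δ γ + γ * η / (δ * (γ + δ)) := by
  have h2 : (σ:ℝ) ^ 2 ≠ 0 := by positivity
  have hspos : 0 ≤ Real.sqrt (η ^ 2 + 2 * σ ^ 2 * (δ + γ)) := Real.sqrt_nonneg _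
  have hs2 : Real.sqrt (η ^ 2 + 2 * σ ^ 2 * (δ + γ)) ^ 2 = η ^ 2 + 2 * σ ^ 2 * (δ + γ)  :=
    Real.sq_sqrt (by positivity)
  have hne : η + Real.sqrt (η ^ 2 + 2 * σ ^ 2 * (δ + γ)) ≠ 0 := by positivity
  have hlne : lamGamma σ η δ γ ≠ 0 := (lam_neg hσ hη).ne
  unfold f1
  have hlam : 1 / lamGamma σ η δ γ = -(σ ^ 2) / (η + Real.sqrt (η ^ 2 + 2 * σ ^ 2 * (δ + γ))) := by
    rw [div_eq_div_iff hlne hne]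
    unfold lamGamma
    field_simp
    ring
  rw [hlam]
  have hδγ : δ * (δ + γ) ≠ 0 := by positivity
  have hδγ2 : δ * (γ + δ) ≠ 0 := by positivity
  field_simp
  ring

noncomputable def h1''' (σ η δ : ℝ) (x : ℝ) : ℝ :=
  (thetaP σ η δ) ^ 3 * Real.exp (thetaP σ η δ * x) -
    (thetaM σ η δ) ^ 3 * Real.exp (thetaM σ η δ * x)

lemma hasDerivAt_ecx (c x : ℝ) :
    HasDerivAt (fun y => Real.exp (c * y)) (c * Real.exp (c * x)) x := by
  have := ((hasDerivAt_id x).const_mul c).exp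
  simpa [mul_comm] using this

lemma hasDerivAt_h1 (x : ℝ) : HasDerivAt (h1 σ η δ) (h1' σ η δ x) x := by
  have := (hasDerivAt_ecx (thetaP σ η δ) x).sub (hasDerivAt_ecx (thetaM σ η δ) x)
  exact this

lemma hasDerivAt_h1' (x : ℝ) : HasDerivAt (h1' σ η δ) (h1'' σ η δ x) x := by
  have := ((hasDerivAt_ecx (thetaP σ η δ) x).const_mul (thetaP σ η δ)).sub
    ((hasDerivAt_ecx (thetaM σ η δ) x).const_mul (thetaM σ η δ))
  refine this.congr_deriv ?_
  unfold h1''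
  ring

lemma hasDerivAt_h1'' (x : ℝ) : HasDerivAt (h1'' σ η δ) (h1''' σ η δ x) x := by
  have := ((hasDerivAt_ecx (thetaP σ η δ) x).const_mul (thetaP σ η δ ^ 2)).sub
    ((hasDerivAt_ecx (thetaM σ η δ) x).const_mul (thetaM σ η δ ^ 2))
  refine this.congr_deriv ?_
  unfold h1'''
  ring

lemma h1'_pos (hσ : 0 < σ) (hη : 0 < η) (hδ : 0 < δ) (x : ℝ) : 0 < h1' σ η δ x := by
  have hp := thetaP_pos hσ hη hδ
  have hm := thetaM_neg hσ hη hδ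
  have e1 : 0 < Real.exp (thetaP σ η δ * x) := Real.exp_pos _
  have e2 : 0 < Real.exp (thetaM σ η δ * x) := Real.exp_pos _
  have h1t : 0 < thetaP σ η δ * Real.exp (thetaP σ η δ * x) := mul_pos hp e1
  have h2 : thetaM σ η δ * Real.exp (thetaM σ η δ * x) < 0 := mul_neg_of_neg_of_pos hm e2
  unfold h1'
  linarith

lemma h1_pos (hσ : 0 < σ) (hη : 0 < η) (hδ : 0 < δ) {x : ℝ} (hx : 0 < x) :
    0 < h1 σ η δ x := by
  have hp := thetaP_pos hσ hη hδ
  have hm := thetaM_neg hσ hη hδ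
  have hlt : thetaM σ η δ * x < thetaP σ η δ * x := by nlinarith
  have := Real.exp_lt_exp.2 hlt
  unfold h1
  linarith

lemma h1_nonneg (hσ : 0 < σ) (hη : 0 < η) (hδ : 0 < δ) {x : ℝ} (hx : 0 ≤ x) :
    0 ≤ h1 σ η δ x := by
  rcases eq_or_lt_of_le hx with h | h
  · simp [h1, ← h]
  · exact (h1_pos hσ hη hδ h).le

lemma ode_h1 (hσ : 0 < σ) (hη : 0 < η) (hδ : 0 < δ) (x : ℝ) :
    σ ^ 2 / 2 * h1'' σ η δ x + η * h1' σ η δ x - δ * h1 σ η δ x = 0 := by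
  have hP := rootP (σ := σ) (η := η) (δ := δ) hσ hη hδ
  have hM := rootM (σ := σ) (η := η) (δ := δ) hσ hη hδ
  unfold h1 h1' h1''
  linear_combination Real.exp (thetaP σ η δ * x) * hP - Real.exp (thetaM σ η δ * x) * hM

lemma ratio_num_neg (hσ : 0 < σ) (hη : 0 < η) (hδ : 0 < δ) (x : ℝ) :
    h1'' σ η δ x ^ 2 - h1' σ η δ x * h1''' σ η δ x < 0 := by
  have hp := thetaP_pos hσ hη hδ
  have hm := thetaM_neg hσ hη hδ
  have key : h1'' σ η δ x ^ 2 - h1' σ η δ x * h1''' σ η δ x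
      = thetaP σ η δ * thetaM σ η δ * (thetaP σ η δ - thetaM σ η δ) ^ 2 *
        (Real.exp (thetaP σ η δ * x) * Real.exp (thetaM σ η δ * x)) := by
    unfold h1' h1'' h1'''
    ring
  rw [key]
  have e1 : 0 < Real.exp (thetaP σ η δ * x) := Real.exp_pos _
  have e2 : 0 < Real.exp (thetaM σ η δ * x) := Real.exp_pos _
  have hpm : thetaP σ η δ * thetaM σ η δ < 0 := mul_neg_of_pos_of_neg hp hm
  have hd : 0 < thetaP σ η δ - thetaM σ η δ := by linarith
  have hsq : 0 < (thetaP σ η δ - thetaM σ η δ) ^ 2 := by positivity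
  exact mul_neg_of_neg_of_pos (mul_neg_of_neg_of_pos hpm hsq) (mul_pos e1 e2)

section Main

variable (hσ : 0 < σ) (hη : 0 < η) (hδ : 0 < δ) (hγ : 0 < γ) (hb : 0 < b)
  (hbeq : g1 σ η δ b = f1 σ η δ γ)

include hσ hη hδ hγ hb hbeq

lemma h1b_eq' :
    δ * (γ + δ) * lamGamma σ η δ γ * h1 σ η δ b
      = h1' σ η δ b * (δ * (γ + δ) + lamGamma σ η δ γ * γ * η) := by
  have hf := f1_eq (σ := σ) (η := η) (δ := δ) (γ := γ) hσ hη hδ hγ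
  have hl : lamGamma σ η δ γ ≠ 0 := (lam_neg hσ hη).ne
  have hb' : h1' σ η δ b ≠ 0 := (h1'_pos hσ hη hδ b).ne'
  have hγδ : (γ:ℝ) + δ ≠ 0 := by positivity
  have hδ' : (δ:ℝ) ≠ 0 := hδ.ne'
  have := hbeq
  rw [hf] at this
  unfold g1 at this
  field_simp at this
  linarith [this]

lemma c11_eq : c11 σ η δ γ b = 1 / h1' σ η δ b := by
  have hl := lam_neg (σ := σ) (η := η) (δ := δ) (γ := γ) hσ hη
  have hb' := h1'_pos hσ hη hδ b
  have hγδ : (0:ℝ) < γ + δ := by positivity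
  have hE3 := h1b_eq' hσ hη hδ hγ hb hbeq
  have hN : (0:ℝ) < (γ / (γ + δ)) * (1 - η * lamGamma σ η δ γ / (γ + δ)) := by
    have h1 : 0 < γ / (γ + δ) := by positivity
    have h2 : 0 < 1 - η * lamGamma σ η δ γ / (γ + δ) := by
      have : η * lamGamma σ η δ γ / (γ + δ) < 0 :=
        div_neg_of_neg_of_pos (mul_neg_of_pos_of_neg hη hl) hγδ
      linarith
    exact mul_pos h1 h2
  have hD : h1' σ η δ b - (δ * lamGamma σ η δ γ / (γ + δ)) * h1 σ η δ b
      = h1' σ η δ b * ((γ / (γ + δ)) * (1 - η * lamGamma σ η δ γ / (γ + δ))) := by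
    have hγδ' : (γ:ℝ) + δ ≠ 0 := hγδ.ne'
    have hδ' : (δ:ℝ) ≠ 0 := hδ.ne'
    field_simp
    linear_combination -hE3
  unfold c11
  rw [hD]
  rw [div_eq_div_iff (by positivity) hb'.ne']
  ring

lemma c12_eq : c12 σ η δ γ b = δ / ((γ + δ) * lamGamma σ η δ γ) := by
  have hl : lamGamma σ η δ γ ≠ 0 := (lam_neg hσ hη).ne
  have hb' : h1' σ η δ b ≠ 0 := (h1'_pos hσ hη hδ b).ne'
  have hγδ : (γ:ℝ) + δ ≠ 0 := by positivity
  have hδ' : (δ:ℝ) ≠ 0 := hδ.ne'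
  have hE3 := h1b_eq' hσ hη hδ hγ hb hbeq
  unfold c12
  rw [c11_eq hσ hη hδ hγ hb hbeq]
  field_simp
  linear_combination hE3

lemma c2match : (γ + δ) * h1'' σ η δ b = δ * lamGamma σ η δ γ * h1' σ η δ b := by
  have E1 := ode_h1 (σ := σ) (η := η) (δ := δ) hσ hη hδ b
  have E2 := rootL (σ := σ) (η := η) (δ := δ) (γ := γ) hσ hη hδ hγ
  have E3 := h1b_eq' hσ hη hδ hγ hb hbeq
  have hl : lamGamma σ η δ γ ≠ 0 := (lam_neg hσ hη).ne
  have hne : σ ^ 2 * δ * lamGamma σ η δ γ / 2 ≠ 0 := by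
    have : (σ:ℝ) ^ 2 * δ ≠ 0 := by positivity
    simp only [div_ne_zero_iff]
    constructor
    · exact mul_ne_zero this hl
    · norm_num
  have key : σ ^ 2 * δ * lamGamma σ η δ γ / 2 *
      ((γ + δ) * h1'' σ η δ b - δ * lamGamma σ η δ γ * h1' σ η δ b) = 0 := by
    linear_combination δ * lamGamma σ η δ γ * (γ + δ) * E1 + δ * E3 -
      δ ^ 2 * h1' σ η δ b * E2
  rcases mul_eq_zero.1 key with h | h
  · exact absurd h hne
  · linarith [h]

end Main

noncomputable def dv (σ η δ γ b : ℝ) (x : ℝ) : ℝ :=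
  if x ≤ b then h1' σ η δ x / h1' σ η δ b
  else (δ * Real.exp (lamGamma σ η δ γ * (x - b)) + γ) / (γ + δ)

noncomputable def ddv (σ η δ γ b : ℝ) (x : ℝ) : ℝ :=
  if x ≤ b then h1'' σ η δ x / h1' σ η δ b
  else δ * lamGamma σ η δ γ * Real.exp (lamGamma σ η δ γ * (x - b)) / (γ + δ)

lemma hasDerivAt_glue {F f g : ℝ → ℝ} {f' b : ℝ}
    (hf : HasDerivAt f f' b) (hg : HasDerivAt g f' b)
    (hFf : ∀ y, y ≤ b → F y = f y) (hFg : ∀ y, b ≤ y → F y = g y) :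
    HasDerivAt F f' b := by
  have h1 : HasDerivWithinAt F f' (Set.Iic b) b :=
    (hf.hasDerivWithinAt).congr (fun y hy => hFf y hy) (hFf b le_rfl)
  have h2 : HasDerivWithinAt F f' (Set.Ici b) b :=
    (hg.hasDerivWithinAt).congr (fun y hy => hFg y hy) (hFg b le_rfl)
  have h3 := h1.union h2
  rwa [Set.Iic_union_Ici, hasDerivWithinAt_univ] at h3

lemma hasDerivAt_expLam (x : ℝ) :
    HasDerivAt (fun y => Real.exp (lamGamma σ η δ γ * (y - b)))
      (lamGamma σ η δ γ * Real.exp (lamGamma σ η δ γ * (x - b))) x := by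
  have h := (((hasDerivAt_id x).sub_const b).const_mul (lamGamma σ η δ γ)).exp
  simpa [mul_comm] using h

lemma hasDerivAt_right (x : ℝ) :
    HasDerivAt (fun y => c12 σ η δ γ b * Real.exp (lamGamma σ η δ γ * (y - b)) +
      (γ / (γ + δ)) * (y - b + c11 σ η δ γ b * h1 σ η δ b + η / (γ + δ)))
      (c12 σ η δ γ b * (lamGamma σ η δ γ * Real.exp (lamGamma σ η δ γ * (x - b))) +
        γ / (γ + δ)) x := by
  have ha := (hasDerivAt_expLam (σ := σ) (η := η) (δ := δ) (γ := γ) (b := b) x).const_mul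
    (c12 σ η δ γ b)
  have h2 : HasDerivAt (fun y => (γ / (γ + δ)) *
      (y - b + c11 σ η δ γ b * h1 σ η δ b + η / (γ + δ))) (γ / (γ + δ) * 1) x :=
    ((((hasDerivAt_id x).sub_const b).add_const
      (c11 σ η δ γ b * h1 σ η δ b)).add_const (η / (γ + δ))).const_mul (γ / (γ + δ))
  have h3 := ha.add h2
  rw [mul_one] at h3
  exact h3

section Main2

variable (hσ : 0 < σ) (hη : 0 < η) (hδ : 0 < δ) (hγ : 0 < γ) (hb : 0 < b)
  (hbeq : g1 σ η δ b = f1 σ η δ γ)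

include hσ hη hδ hγ hb hbeq

lemma h1b_div : h1 σ η δ b =
    h1' σ η δ b * (δ * (γ + δ) + lamGamma σ η δ γ * γ * η) / (δ * (γ + δ) * lamGamma σ η δ γ) := by
  have hl : lamGamma σ η δ γ ≠ 0 := (lam_neg hσ hη).ne
  have hγδ : (γ:ℝ) + δ ≠ 0 := by positivity
  have hδ' : (δ:ℝ) ≠ 0 := hδ.ne'
  have hE3 := h1b_eq' hσ hη hδ hγ hb hbeq
  field_simp
  linear_combination hE3

lemma vmatch : c12 σ η δ γ b +
    (γ / (γ + δ)) * (c11 σ η δ γ b * h1 σ η δ b + η / (γ + δ)) = c11 σ η δ γ b * h1 σ η δ b := by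
  have hl : lamGamma σ η δ γ ≠ 0 := (lam_neg hσ hη).ne
  have hb' : h1' σ η δ b ≠ 0 := (h1'_pos hσ hη hδ b).ne'
  have hγδ : (γ:ℝ) + δ ≠ 0 := by positivity
  have hδ' : (δ:ℝ) ≠ 0 := hδ.ne'
  rw [c11_eq hσ hη hδ hγ hb hbeq, c12_eq hσ hη hδ hγ hb hbeq, h1b_div hσ hη hδ hγ hb hbeq]
  field_simp
  ring

lemma dvmatch : c12 σ η δ γ b * lamGamma σ η δ γ = δ / (γ + δ) := by
  have hl : lamGamma σ η δ γ ≠ 0 := (lam_neg hσ hη).ne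
  have hγδ : (γ:ℝ) + δ ≠ 0 := by positivity
  rw [c12_eq hσ hη hδ hγ hb hbeq]
  field_simp

lemma dv_at_b : dv σ η δ γ b b = 1 := by
  have hb' : h1' σ η δ b ≠ 0 := (h1'_pos hσ hη hδ b).ne'
  simp [dv, le_refl, div_self hb']

lemma hasDerivAt_vGammaB (x : ℝ) : HasDerivAt (vGammaB σ η δ γ b) (dv σ η δ γ b x) x := by
  have hb' : h1' σ η δ b ≠ 0 := (h1'_pos hσ hη hδ b).ne'
  have hγδ : (γ:ℝ) + δ ≠ 0 := by positivity
  have hc11 := c11_eq hσ hη hδ hγ hb hbeq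
  have hleft : ∀ y : ℝ, HasDerivAt (fun z => c11 σ η δ γ b * h1 σ η δ z)
      (c11 σ η δ γ b * h1' σ η δ y) y := fun y => (hasDerivAt_h1 y).const_mul _
  rcases lt_trichotomy x b with hx | hx | hx
  · have hev : vGammaB σ η δ γ b =ᶠ[nhds x] fun z => c11 σ η δ γ b * h1 σ η δ z := by
      filter_upwards [Iio_mem_nhds hx] with y hy
      have hyb : y ≤ b := le_of_lt (Set.mem_Iio.1 hy)
      simp [vGammaB, hyb]
    have hres := (hleft x).congr_of_eventuallyEq hev
    have hdv : dv σ η δ γ b x = c11 σ η δ γ b * h1' σ η δ x := by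
      rw [dv, if_pos hx.le, hc11]
      ring
    rwa [hdv]
  · rw [hx, dv_at_b hσ hη hδ hγ hb hbeq]
    apply hasDerivAt_glue (f := fun z => c11 σ η δ γ b * h1 σ η δ z)
      (g := fun z => c12 σ η δ γ b * Real.exp (lamGamma σ η δ γ * (z - b)) +
        (γ / (γ + δ)) * (z - b + c11 σ η δ γ b * h1 σ η δ b + η / (γ + δ)))
    · have hres := hleft b
      have : c11 σ η δ γ b * h1' σ η δ b = 1 := by
        rw [hc11]; field_simp
      rwa [this] at hres
    · have h := hasDerivAt_right (σ := σ) (η := η) (δ := δ) (γ := γ) (b := b) b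
      have hval : c12 σ η δ γ b * (lamGamma σ η δ γ * Real.exp (lamGamma σ η δ γ * (b - b))) +
          γ / (γ + δ) = 1 := by
        rw [sub_self, mul_zero, Real.exp_zero, mul_one, dvmatch hσ hη hδ hγ hb hbeq,
          ← add_div, div_eq_one_iff_eq hγδ]
        ring
      rwa [hval] at h
    · intro y hy; simp [vGammaB, hy]
    · intro y hy
      rcases eq_or_lt_of_le hy with h | h
      · have h' : y = b := h.symm
        subst h'
        rw [vGammaB, if_pos le_rfl, sub_self, mul_zero, Real.exp_zero, mul_one]
        linear_combination -(vmatch hσ hη hδ hγ hb hbeq)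
      · rw [vGammaB, if_neg (not_le.2 h)]
  · have hev : vGammaB σ η δ γ b =ᶠ[nhds x] fun z =>
        c12 σ η δ γ b * Real.exp (lamGamma σ η δ γ * (z - b)) +
          (γ / (γ + δ)) * (z - b + c11 σ η δ γ b * h1 σ η δ b + η / (γ + δ)) := by
      filter_upwards [Ioi_mem_nhds hx] with y hy
      have hyb : b < y := Set.mem_Ioi.1 hy
      simp [vGammaB, not_le.2 hyb]
    have h := (hasDerivAt_right (σ := σ) (η := η) (δ := δ) (γ := γ) (b := b)
      x).congr_of_eventuallyEq hev
    have hdv : dv σ η δ γ b x =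
        c12 σ η δ γ b * (lamGamma σ η δ γ * Real.exp (lamGamma σ η δ γ * (x - b))) +
          γ / (γ + δ) := by
      rw [dv, if_neg (not_le.2 hx), ← mul_assoc, dvmatch hσ hη hδ hγ hb hbeq]
      field_simp
    rwa [hdv]

end Main2

section Main3

variable (hσ : 0 < σ) (hη : 0 < η) (hδ : 0 < δ) (hγ : 0 < γ) (hb : 0 < b)
  (hbeq : g1 σ η δ b = f1 σ η δ γ)

include hσ hη hδ hγ hb hbeq

lemma ddv_at_b : h1'' σ η δ b / h1' σ η δ b = δ * lamGamma σ η δ γ / (γ + δ) := by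
  have hb' : h1' σ η δ b ≠ 0 := (h1'_pos hσ hη hδ b).ne'
  have hγδ : (γ:ℝ) + δ ≠ 0 := by positivity
  rw [div_eq_div_iff hb' hγδ]
  linear_combination c2match hσ hη hδ hγ hb hbeq

lemma hasDerivAt_dv (x : ℝ) : HasDerivAt (dv σ η δ γ b) (ddv σ η δ γ b x) x := by
  have hb' : h1' σ η δ b ≠ 0 := (h1'_pos hσ hη hδ b).ne'
  have hγδ : (γ:ℝ) + δ ≠ 0 := by positivity
  have hleft : ∀ y : ℝ, HasDerivAt (fun z => h1' σ η δ z / h1' σ η δ b)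
      (h1'' σ η δ y / h1' σ η δ b) y := fun y => (hasDerivAt_h1' y).div_const _
  have hright : ∀ y : ℝ, HasDerivAt
      (fun z => (δ * Real.exp (lamGamma σ η δ γ * (z - b)) + γ) / (γ + δ))
      (δ * lamGamma σ η δ γ * Real.exp (lamGamma σ η δ γ * (y - b)) / (γ + δ)) y := by
    intro y
    have h := (((hasDerivAt_expLam (σ := σ) (η := η) (δ := δ) (γ := γ) (b := b)
      y).const_mul δ).add_const γ).div_const (γ + δ)
    refine h.congr_deriv ?_
    ring
  rcases lt_trichotomy x b with hx | hx | hx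
  · have hev : dv σ η δ γ b =ᶠ[nhds x] fun z => h1' σ η δ z / h1' σ η δ b := by
      filter_upwards [Iio_mem_nhds hx] with y hy
      have hyb : y ≤ b := le_of_lt (Set.mem_Iio.1 hy)
      simp [dv, hyb]
    have hres := (hleft x).congr_of_eventuallyEq hev
    have hd : ddv σ η δ γ b x = h1'' σ η δ x / h1' σ η δ b := by rw [ddv, if_pos hx.le]
    rwa [hd]
  · rw [hx]
    have hd : ddv σ η δ γ b b = h1'' σ η δ b / h1' σ η δ b := by rw [ddv, if_pos le_rfl]
    rw [hd]
    apply hasDerivAt_glue (f := fun z => h1' σ η δ z / h1' σ η δ b)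
      (g := fun z => (δ * Real.exp (lamGamma σ η δ γ * (z - b)) + γ) / (γ + δ))
    · exact hleft b
    · have h := hright b
      rw [sub_self, mul_zero, Real.exp_zero, mul_one] at h
      rwa [ddv_at_b hσ hη hδ hγ hb hbeq]
    · intro y hy; simp [dv, hy]
    · intro y hy
      rcases eq_or_lt_of_le hy with h | h
      · have h' : y = b := h.symm
        subst h'
        rw [dv, if_pos le_rfl, sub_self, mul_zero, Real.exp_zero, div_self hb']
        field_simp
        ring
      · rw [dv, if_neg (not_le.2 h)]
  · have hev : dv σ η δ γ b =ᶠ[nhds x] fun z =>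
        (δ * Real.exp (lamGamma σ η δ γ * (z - b)) + γ) / (γ + δ) := by
      filter_upwards [Ioi_mem_nhds hx] with y hy
      have hyb : b < y := Set.mem_Ioi.1 hy
      simp [dv, not_le.2 hyb]
    have hres := (hright x).congr_of_eventuallyEq hev
    have hd : ddv σ η δ γ b x =
        δ * lamGamma σ η δ γ * Real.exp (lamGamma σ η δ γ * (x - b)) / (γ + δ) := by
      rw [ddv, if_neg (not_le.2 hx)]
    rwa [hd]

lemma deriv_vGammaB : deriv (vGammaB σ η δ γ b) = dv σ η δ γ b :=
  funext fun x => (hasDerivAt_vGammaB hσ hη hδ hγ hb hbeq x).deriv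

lemma deriv2_vGammaB : deriv (deriv (vGammaB σ η δ γ b)) = ddv σ η δ γ b := by
  rw [deriv_vGammaB hσ hη hδ hγ hb hbeq]
  exact funext fun x => (hasDerivAt_dv hσ hη hδ hγ hb hbeq x).deriv

lemma h1''_neg {x : ℝ} (hx : x ≤ b) : h1'' σ η δ x < 0 := by
  have hp := thetaP_pos hσ hη hδ
  have hm := thetaM_neg hσ hη hδ
  have hbneg : h1'' σ η δ b < 0 := by
    have hc := c2match hσ hη hδ hγ hb hbeq
    have hγδ : (0:ℝ) < γ + δ := by positivity
    have hneg : δ * lamGamma σ η δ γ * h1' σ η δ b < 0 :=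
      mul_neg_of_neg_of_pos (mul_neg_of_pos_of_neg hδ (lam_neg hσ hη)) (h1'_pos hσ hη hδ b)
    nlinarith
  have hb' : thetaP σ η δ ^ 2 * Real.exp (thetaP σ η δ * b) <
      thetaM σ η δ ^ 2 * Real.exp (thetaM σ η δ * b) := by
    have := hbneg; unfold h1'' at this; linarith
  have e1 : thetaP σ η δ ^ 2 * Real.exp (thetaP σ η δ * x) ≤
      thetaP σ η δ ^ 2 * Real.exp (thetaP σ η δ * b) := by
    have : thetaP σ η δ * x ≤ thetaP σ η δ * b := by nlinarith
    have := Real.exp_le_exp.2 this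
    nlinarith [sq_nonneg (thetaP σ η δ)]
  have e2 : thetaM σ η δ ^ 2 * Real.exp (thetaM σ η δ * b) ≤
      thetaM σ η δ ^ 2 * Real.exp (thetaM σ η δ * x) := by
    have : thetaM σ η δ * b ≤ thetaM σ η δ * x := by nlinarith
    have := Real.exp_le_exp.2 this
    nlinarith [sq_nonneg (thetaM σ η δ)]
  unfold h1''
  linarith

lemma ddv_neg (x : ℝ) : ddv σ η δ γ b x < 0 := by
  have hb' := h1'_pos hσ hη hδ b
  have hγδ : (0:ℝ) < γ + δ := by positivity
  rcases le_or_gt x b with hx | hx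
  · rw [ddv, if_pos hx]
    exact div_neg_of_neg_of_pos (h1''_neg hσ hη hδ hγ hb hbeq hx) hb'
  · rw [ddv, if_neg (not_le.2 hx)]
    apply div_neg_of_neg_of_pos _ hγδ
    exact mul_neg_of_neg_of_pos (mul_neg_of_pos_of_neg hδ (lam_neg hσ hη)) (Real.exp_pos _)

lemma dv_pos (x : ℝ) : 0 < dv σ η δ γ b x := by
  have hb' := h1'_pos hσ hη hδ b
  have hγδ : (0:ℝ) < γ + δ := by positivity
  rcases le_or_gt x b with hx | hx
  · rw [dv, if_pos hx]
    exact div_pos (h1'_pos hσ hη hδ x) hb'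
  · rw [dv, if_neg (not_le.2 hx)]
    have : 0 < δ * Real.exp (lamGamma σ η δ γ * (x - b)) + γ := by positivity
    exact div_pos this hγδ

lemma h1'_antitone : AntitoneOn (h1' σ η δ) (Set.Iic b) := by
  apply antitoneOn_of_deriv_nonpos (convex_Iic b)
  · exact fun x _ => (hasDerivAt_h1' x).differentiableAt.continuousAt.continuousWithinAt
  · intro x _
    exact (hasDerivAt_h1' x).differentiableAt.differentiableWithinAt
  · intro x hx
    rw [interior_Iic] at hx
    rw [(hasDerivAt_h1' x).deriv]
    exact (h1''_neg hσ hη hδ hγ hb hbeq (le_of_lt hx)).le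

lemma dv_ge_one {x : ℝ} (hx : x ≤ b) : 1 ≤ dv σ η δ γ b x := by
  have hb' := h1'_pos hσ hη hδ b
  rw [dv, if_pos hx]
  rw [le_div_iff₀ hb', one_mul]
  exact h1'_antitone hσ hη hδ hγ hb hbeq hx (le_refl b : b ∈ Set.Iic b) hx

lemma dv_le_one {x : ℝ} (hbx : b ≤ x) : dv σ η δ γ b x ≤ 1 := by
  have hb' := h1'_pos hσ hη hδ b
  have hγδ : (0:ℝ) < γ + δ := by positivity
  rcases eq_or_lt_of_le hbx with hx | hx
  · rw [← hx, dv_at_b hσ hη hδ hγ hb hbeq]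
  · rw [dv, if_neg (not_le.2 hx)]
    rw [div_le_one hγδ]
    have hE : Real.exp (lamGamma σ η δ γ * (x - b)) ≤ 1 := by
      rw [Real.exp_le_one_iff]
      have := lam_neg (σ := σ) (η := η) (δ := δ) (γ := γ) hσ hη
      nlinarith
    nlinarith

end Main3

lemma hasDerivAt_expc (c a x : ℝ) :
    HasDerivAt (fun y => Real.exp (c * (y - a))) (c * Real.exp (c * (x - a))) x := by
  have h := (((hasDerivAt_id x).sub_const a).const_mul c).exp
  simpa [mul_comm] using h

section Main4

variable (hσ : 0 < σ) (hη : 0 < η) (hδ : 0 < δ) (hγ : 0 < γ) (hb : 0 < b)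
  (hbeq : g1 σ η δ b = f1 σ η δ γ)

include hσ hη hδ hγ hb hbeq

lemma vGammaB_strictMono : StrictMono (vGammaB σ η δ γ b) := by
  apply strictMono_of_deriv_pos
  intro x
  rw [deriv_vGammaB hσ hη hδ hγ hb hbeq]
  exact dv_pos hσ hη hδ hγ hb hbeq x

lemma vGammaB_concave : ConcaveOn ℝ (Set.Ioi 0) (vGammaB σ η δ γ b) := by
  have hdiff : ∀ x : ℝ, DifferentiableAt ℝ (vGammaB σ η δ γ b) x :=
    fun x => (hasDerivAt_vGammaB hσ hη hδ hγ hb hbeq x).differentiableAt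
  apply concaveOn_of_deriv2_nonpos (convex_Ioi 0)
  · exact fun x _ => (hdiff x).continuousAt.continuousWithinAt
  · exact fun x _ => (hdiff x).differentiableWithinAt
  · intro x _
    rw [deriv_vGammaB hσ hη hδ hγ hb hbeq]
    exact (hasDerivAt_dv hσ hη hδ hγ hb hbeq x).differentiableAt.differentiableWithinAt
  · intro x _
    have : deriv^[2] (vGammaB σ η δ γ b) x = deriv (deriv (vGammaB σ η δ γ b)) x := rfl
    rw [this, deriv2_vGammaB hσ hη hδ hγ hb hbeq]
    exact (ddv_neg hσ hη hδ hγ hb hbeq x).le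

lemma Rf_eq_left {x : ℝ} (hx : x ≤ b) :
    dv σ η δ γ b x / ddv σ η δ γ b x = h1' σ η δ x / h1'' σ η δ x := by
  have hb' : h1' σ η δ b ≠ 0 := (h1'_pos hσ hη hδ b).ne'
  rw [dv, if_pos hx, ddv, if_pos hx, div_div_div_comm, div_self hb', div_one]

lemma Rf_eq_right {x : ℝ} (hx : b ≤ x) :
    dv σ η δ γ b x / ddv σ η δ γ b x =
      1 / lamGamma σ η δ γ +
        γ / (δ * lamGamma σ η δ γ) * Real.exp (-lamGamma σ η δ γ * (x - b)) := by
  have hl : lamGamma σ η δ γ ≠ 0 := (lam_neg hσ hη).ne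
  have hγδ : (γ:ℝ) + δ ≠ 0 := by positivity
  have hδ' : (δ:ℝ) ≠ 0 := hδ.ne'
  have hE : Real.exp (lamGamma σ η δ γ * (x - b)) ≠ 0 := (Real.exp_pos _).ne'
  have hEneg : Real.exp (-lamGamma σ η δ γ * (x - b)) =
      (Real.exp (lamGamma σ η δ γ * (x - b)))⁻¹ := by
    rw [← Real.exp_neg]; ring_nf
  rcases eq_or_lt_of_le hx with h | h
  · rw [← h, sub_self, mul_zero, Real.exp_zero, dv_at_b hσ hη hδ hγ hb hbeq, ddv, if_pos le_rfl,
      one_div, ddv_at_b hσ hη hδ hγ hb hbeq]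
    field_simp
    ring
  · rw [dv, if_neg (not_le.2 h), ddv, if_neg (not_le.2 h), hEneg]
    rw [div_div_div_comm, div_self hγδ, div_one]
    field_simp

lemma Rf_antitone : AntitoneOn
    (fun x => dv σ η δ γ b x / ddv σ η δ γ b x) (Set.Ioi 0) := by
  have hl := lam_neg (σ := σ) (η := η) (δ := δ) (γ := γ) hσ hη
  have hδ' : (δ:ℝ) ≠ 0 := hδ.ne'
  -- antitone on Iic b
  have hqder : ∀ x : ℝ, x ≤ b → HasDerivAt (fun y => h1' σ η δ y / h1'' σ η δ y)
      ((h1'' σ η δ x * h1'' σ η δ x - h1' σ η δ x * h1''' σ η δ x) / h1'' σ η δ x ^ 2) x := by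
    intro x hx
    exact (hasDerivAt_h1' x).div (hasDerivAt_h1'' x) (h1''_neg hσ hη hδ hγ hb hbeq hx).ne
  have hA1 : AntitoneOn (fun y => h1' σ η δ y / h1'' σ η δ y) (Set.Iic b) := by
    apply antitoneOn_of_deriv_nonpos (convex_Iic b)
    · intro x hx
      exact ((hqder x hx).differentiableAt).continuousAt.continuousWithinAt
    · intro x hx
      rw [interior_Iic] at hx
      exact ((hqder x hx.le).differentiableAt).differentiableWithinAt
    · intro x hx
      rw [interior_Iic] at hx
      rw [(hqder x hx.le).deriv]
      apply div_nonpos_of_nonpos_of_nonneg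
      · have := ratio_num_neg (σ := σ) (η := η) (δ := δ) hσ hη hδ x
        nlinarith
      · positivity
  have hA2 : AntitoneOn (fun x => 1 / lamGamma σ η δ γ +
      γ / (δ * lamGamma σ η δ γ) * Real.exp (-lamGamma σ η δ γ * (x - b))) (Set.Ici b) := by
    apply antitoneOn_of_deriv_nonpos (convex_Ici b)
    · apply Continuous.continuousOn
      continuity
    · intro x _
      apply DifferentiableAt.differentiableWithinAt
      apply DifferentiableAt.const_add
      exact ((hasDerivAt_expc (-lamGamma σ η δ γ) b x).differentiableAt).const_mul _
    · intro x _
      have hD : HasDerivAt (fun x => 1 / lamGamma σ η δ γ +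
          γ / (δ * lamGamma σ η δ γ) * Real.exp (-lamGamma σ η δ γ * (x - b)))
          (γ / (δ * lamGamma σ η δ γ) *
            (-lamGamma σ η δ γ * Real.exp (-lamGamma σ η δ γ * (x - b)))) x :=
        ((hasDerivAt_expc (-lamGamma σ η δ γ) b x).const_mul _).const_add _
      rw [hD.deriv]
      have h1 : γ / (δ * lamGamma σ η δ γ) < 0 :=
        div_neg_of_pos_of_neg hγ (mul_neg_of_pos_of_neg hδ hl)
      have h2 : 0 < -lamGamma σ η δ γ * Real.exp (-lamGamma σ η δ γ * (x - b)) := by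
        have := Real.exp_pos (-lamGamma σ η δ γ * (x - b))
        nlinarith
      exact (mul_neg_of_neg_of_pos h1 h2).le
  intro x hx y hy hxy
  simp only
  rcases le_or_gt y b with hyb | hyb
  · rw [Rf_eq_left hσ hη hδ hγ hb hbeq (le_trans hxy hyb), Rf_eq_left hσ hη hδ hγ hb hbeq hyb]
    exact hA1 (le_trans hxy hyb : x ∈ Set.Iic b) hyb hxy
  · rcases le_or_gt x b with hxb | hxb
    · rw [Rf_eq_left hσ hη hδ hγ hb hbeq hxb, Rf_eq_right hσ hη hδ hγ hb hbeq hyb.le]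
      calc 1 / lamGamma σ η δ γ +
            γ / (δ * lamGamma σ η δ γ) * Real.exp (-lamGamma σ η δ γ * (y - b))
          ≤ 1 / lamGamma σ η δ γ +
            γ / (δ * lamGamma σ η δ γ) * Real.exp (-lamGamma σ η δ γ * (b - b)) :=
            hA2 (le_refl b : b ∈ Set.Ici b) hyb.le hyb.le
        _ = h1' σ η δ b / h1'' σ η δ b := by
            rw [← Rf_eq_right hσ hη hδ hγ hb hbeq le_rfl,
              ← Rf_eq_left hσ hη hδ hγ hb hbeq le_rfl]
        _ ≤ h1' σ η δ x / h1'' σ η δ x := hA1 hxb (le_refl b : b ∈ Set.Iic b) hxb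
    · rw [Rf_eq_right hσ hη hδ hγ hb hbeq hxb.le, Rf_eq_right hσ hη hδ hγ hb hbeq hyb.le]
      exact hA2 hxb.le hyb.le hxy

end Main4

section Main5

variable (hσ : 0 < σ) (hη : 0 < η) (hδ : 0 < δ) (hγ : 0 < γ) (hb : 0 < b)
  (hbeq : g1 σ η δ b = f1 σ η δ γ)

include hσ hη hδ hγ hb hbeq

lemma Rf_tendsto : Tendsto (fun x => dv σ η δ γ b x / ddv σ η δ γ b x)
    (nhdsWithin 0 (Set.Ioi 0)) (nhds (-σ ^ 2 / (2 * η))) := by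
  have hp := thetaP_pos hσ hη hδ
  have hm := thetaM_neg hσ hη hδ
  have h0 : h1'' σ η δ 0 ≠ 0 := (h1''_neg hσ hη hδ hγ hb hbeq hb.le).ne
  have hcont : ContinuousAt (fun y => h1' σ η δ y / h1'' σ η δ y) 0 := by
    apply ContinuousAt.div
    · exact (hasDerivAt_h1' 0).differentiableAt.continuousAt
    · exact (hasDerivAt_h1'' 0).differentiableAt.continuousAt
    · exact h0
  have hval : h1' σ η δ 0 / h1'' σ η δ 0 = -σ ^ 2 / (2 * η) := by
    have hsum : σ ^ 2 * (thetaP σ η δ + thetaM σ η δ) = -2 * η := by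
      have := theta_sum (σ := σ) (η := η) (δ := δ) hσ
      have h2 : (σ:ℝ) ^ 2 ≠ 0 := by positivity
      field_simp at this
      linarith
    have h00 : h1'' σ η δ 0 = thetaP σ η δ ^ 2 - thetaM σ η δ ^ 2 := by
      simp [h1'']
    have h01 : h1' σ η δ 0 = thetaP σ η δ - thetaM σ η δ := by
      simp [h1']
    rw [h00] at h0
    rw [h01, h00]
    rw [div_eq_div_iff h0 (by positivity : (0:ℝ) < 2 * η).ne']
    linear_combination (thetaP σ η δ - thetaM σ η δ) * hsum
  have htd : Tendsto (fun y => h1' σ η δ y / h1'' σ η δ y) (nhdsWithin 0 (Set.Ioi 0))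
      (nhds (-σ ^ 2 / (2 * η))) := by
    rw [← hval]
    exact (hcont.tendsto).mono_left nhdsWithin_le_nhds
  apply htd.congr'
  filter_upwards [Ioo_mem_nhdsGT_of_mem (by constructor <;> [exact le_rfl; exact hb] :
      (0:ℝ) ∈ Set.Ico 0 b)] with y hy
  exact (Rf_eq_left hσ hη hδ hγ hb hbeq hy.2.le).symm

lemma Rf_le (x : ℝ) (hx : 0 < x) :
    dv σ η δ γ b x / ddv σ η δ γ b x ≤ -σ ^ 2 / (2 * η) := by
  apply ge_of_tendsto (Rf_tendsto hσ hη hδ hγ hb hbeq)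
  filter_upwards [Ioo_mem_nhdsGT_of_mem (by constructor <;> [exact le_rfl; exact hx] :
      (0:ℝ) ∈ Set.Ico 0 x)] with y hy
  exact Rf_antitone hσ hη hδ hγ hb hbeq hy.1 hx hy.2.le

lemma mu_ineq (x : ℝ) (hx : 0 < x) {μ : ℝ} (hμ : 2 * η ≤ μ) :
    0 ≤ μ * dv σ η δ γ b x + σ ^ 2 * ddv σ η δ γ b x := by
  have hR := Rf_le hσ hη hδ hγ hb hbeq x hx
  have hdd := ddv_neg hσ hη hδ hγ hb hbeq x
  have hdv := dv_pos hσ hη hδ hγ hb hbeq x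
  have key : -σ ^ 2 / (2 * η) * ddv σ η δ γ b x ≤ dv σ η δ γ b x := by
    rw [div_le_iff_of_neg hdd] at hR
    linarith
  have h2η : (0:ℝ) < 2 * η := by positivity
  have hmul := mul_le_mul_of_nonneg_left key h2η.le
  have hc : 2 * η * (-σ ^ 2 / (2 * η) * ddv σ η δ γ b x) = -σ ^ 2 * ddv σ η δ γ b x := by
    field_simp
  rw [hc] at hmul
  have h3 : 2 * η * dv σ η δ γ b x ≤ μ * dv σ η δ γ b x :=
    mul_le_mul_of_nonneg_right hμ hdv.le
  linarith

lemma ode_left {x : ℝ} (hx : x ≤ b) :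
    σ ^ 2 / 2 * ddv σ η δ γ b x + η * dv σ η δ γ b x - δ * vGammaB σ η δ γ b x = 0 := by
  have hb' : h1' σ η δ b ≠ 0 := (h1'_pos hσ hη hδ b).ne'
  rw [ddv, if_pos hx, dv, if_pos hx, vGammaB, if_pos hx, c11_eq hσ hη hδ hγ hb hbeq]
  have hode := ode_h1 (σ := σ) (η := η) (δ := δ) hσ hη hδ x
  linear_combination (1 / h1' σ η δ b) * hode

lemma ode_right {x : ℝ} (hx : b < x) :
    σ ^ 2 / 2 * ddv σ η δ γ b x + η * dv σ η δ γ b x - δ * vGammaB σ η δ γ b x +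
      γ * ((x - b) + vGammaB σ η δ γ b b - vGammaB σ η δ γ b x) = 0 := by
  have hl : lamGamma σ η δ γ ≠ 0 := (lam_neg hσ hη).ne
  have hγδ : (γ:ℝ) + δ ≠ 0 := by positivity
  have hrootL := rootL (σ := σ) (η := η) (δ := δ) (γ := γ) hσ hη hδ hγ
  rw [ddv, if_neg (not_le.2 hx), dv, if_neg (not_le.2 hx), vGammaB, if_neg (not_le.2 hx),
    vGammaB, if_pos le_rfl, c12_eq hσ hη hδ hγ hb hbeq]
  set E := Real.exp (lamGamma σ η δ γ * (x - b)) with hE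
  set G := c11 σ η δ γ b * h1 σ η δ b with hG
  field_simp
  linear_combination (2 * δ * E * (γ + δ)) * hrootL

lemma W_mono : MonotoneOn (fun y => vGammaB σ η δ γ b y - y) (Set.Iic b) := by
  apply monotoneOn_of_deriv_nonneg (convex_Iic b)
  · apply Continuous.continuousOn
    have : Differentiable ℝ (vGammaB σ η δ γ b) :=
      fun x => (hasDerivAt_vGammaB hσ hη hδ hγ hb hbeq x).differentiableAt
    exact (this.continuous).sub continuous_id
  · intro x _
    exact (((hasDerivAt_vGammaB hσ hη hδ hγ hb hbeq x).sub
      (hasDerivAt_id' x)).differentiableAt).differentiableWithinAt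
  · intro x hx
    rw [interior_Iic] at hx
    rw [(show HasDerivAt (fun y => vGammaB σ η δ γ b y - y) (dv σ η δ γ b x - 1) x from
      (hasDerivAt_vGammaB hσ hη hδ hγ hb hbeq x).sub (hasDerivAt_id' x)).deriv]
    have := dv_ge_one hσ hη hδ hγ hb hbeq hx.le
    linarith

lemma W_anti : AntitoneOn (fun y => vGammaB σ η δ γ b y - y) (Set.Ici b) := by
  apply antitoneOn_of_deriv_nonpos (convex_Ici b)
  · apply Continuous.continuousOn
    have : Differentiable ℝ (vGammaB σ η δ γ b) :=
      fun x => (hasDerivAt_vGammaB hσ hη hδ hγ hb hbeq x).differentiableAt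
    exact (this.continuous).sub continuous_id
  · intro x _
    exact (((hasDerivAt_vGammaB hσ hη hδ hγ hb hbeq x).sub
      (hasDerivAt_id' x)).differentiableAt).differentiableWithinAt
  · intro x hx
    rw [interior_Ici] at hx
    rw [(show HasDerivAt (fun y => vGammaB σ η δ γ b y - y) (dv σ η δ γ b x - 1) x from
      (hasDerivAt_vGammaB hσ hη hδ hγ hb hbeq x).sub (hasDerivAt_id' x)).deriv]
    have := dv_le_one hσ hη hδ hγ hb hbeq hx.le
    linarith

lemma W_le {x y : ℝ} (hx : 0 < x) (hy0 : 0 ≤ y) (hyx : y ≤ x) :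
    vGammaB σ η δ γ b y - y ≤ vGammaB σ η δ γ b (min x b) - min x b := by
  rcases le_or_gt y (min x b) with h | h
  · have h1m : y ∈ Set.Iic b := Set.mem_Iic.2 (le_trans h (min_le_right x b))
    have h2m : min x b ∈ Set.Iic b := Set.mem_Iic.2 (min_le_right x b)
    exact W_mono hσ hη hδ hγ hb hbeq h1m h2m h
  · have hbx : b ≤ x := by
      rcases le_or_gt b x with h' | h'
      · exact h'
      · exfalso
        rw [min_eq_left h'.le] at h
        exact absurd hyx (not_le.2 h)
    rw [min_eq_right hbx] at *
    exact W_anti hσ hη hδ hγ hb hbeq (le_refl b : b ∈ Set.Ici b) (le_of_lt h) h.le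

end Main5

section Main6

variable (hσ : 0 < σ) (hη : 0 < η) (hδ : 0 < δ) (hγ : 0 < γ) (hb : 0 < b)
  (hbeq : g1 σ η δ b = f1 σ η δ γ)

include hσ hη hδ hγ hb hbeq

lemma ode_min (x : ℝ) (hx : 0 < x) :
    σ ^ 2 / 2 * ddv σ η δ γ b x + η * dv σ η δ γ b x - δ * vGammaB σ η δ γ b x +
      γ * ((x - min x b) + vGammaB σ η δ γ b (min x b) - vGammaB σ η δ γ b x) = 0 := by
  rcases le_or_gt x b with hxb | hxb
  · rw [min_eq_left hxb]
    linear_combination ode_left hσ hη hδ hγ hb hbeq hxb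
  · rw [min_eq_right hxb.le]
    exact ode_right hσ hη hδ hγ hb hbeq hxb

lemma isGreatest_zero {μ : ℝ} (hμ2 : 2 * η ≤ μ) (x : ℝ) (hx : 0 < x) :
    IsGreatest ((fun p : ℝ × ℝ =>
        1 / 2 * σ ^ 2 * p.1 ^ 2 * ddv σ η δ γ b x +
          (η - (1 - p.1) * μ) * dv σ η δ γ b x -
          δ * vGammaB σ η δ γ b x +
          γ * (p.2 + vGammaB σ η δ γ b (x - p.2) - vGammaB σ η δ γ b x)) ''
      (Set.Icc 0 1 ×ˢ Set.Icc 0 x)) 0 := by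
  have hdd := ddv_neg hσ hη hδ hγ hb hbeq x
  have hdv := dv_pos hσ hη hδ hγ hb hbeq x
  have hODE := ode_min hσ hη hδ hγ hb hbeq x hx
  have hminx : min x b ≤ x := min_le_left x b
  have hmin0 : 0 < min x b := lt_min hx hb
  constructor
  · refine ⟨(1, x - min x b), ?_, ?_⟩
    · constructor
      · exact ⟨show (0:ℝ) ≤ 1 from zero_le_one, show (1:ℝ) ≤ 1 from le_refl 1⟩
      · exact ⟨show (0:ℝ) ≤ x - min x b by linarith,
          show x - min x b ≤ x by linarith⟩
    · have harg : x - (x - min x b) = min x b := by ring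
      simp only [harg]
      linear_combination hODE
  · rintro z ⟨⟨u, ξ⟩, ⟨hu, hξ⟩, rfl⟩
    simp only at hu hξ ⊢
    have hu0 : (0:ℝ) ≤ u := hu.1
    have hu1 : u ≤ 1 := hu.2
    have hmu := mu_ineq hσ hη hδ hγ hb hbeq x hx hμ2
    -- step 1 : reduce to u = 1
    have hbr : 0 ≤ μ * dv σ η δ γ b x + σ ^ 2 / 2 * (1 + u) * ddv σ η δ γ b x := by
      nlinarith [mul_nonneg (show (0:ℝ) ≤ 1 - u by linarith)
        (show (0:ℝ) ≤ -ddv σ η δ γ b x by linarith), sq_nonneg σ]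
    have hstep : 0 ≤ (1 - u) * (μ * dv σ η δ γ b x + σ ^ 2 / 2 * (1 + u) * ddv σ η δ γ b x) :=
      mul_nonneg (by linarith) hbr
    have hstep1 : 1 / 2 * σ ^ 2 * u ^ 2 * ddv σ η δ γ b x +
        (η - (1 - u) * μ) * dv σ η δ γ b x ≤
        1 / 2 * σ ^ 2 * ddv σ η δ γ b x + η * dv σ η δ γ b x := by nlinarith [hstep]
    -- step 2 : jump part
    have hy0 : 0 ≤ x - ξ := by linarith [hξ.2]
    have hyx : x - ξ ≤ x := by linarith [hξ.1]
    have hW := W_le hσ hη hδ hγ hb hbeq hx hy0 hyx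
    have hdiff : ξ + vGammaB σ η δ γ b (x - ξ) ≤ (x - min x b) + vGammaB σ η δ γ b (min x b) := by
      linarith [hW]
    have hjump := mul_le_mul_of_nonneg_left hdiff hγ.le
    nlinarith [hstep1, hjump, hODE]

end Main6

end VGB

open VGB in
theorem vGammaB_optimal_properties (σ η δ γ μ bγ : ℝ)
    (hσ : 0 < σ) (hη : 0 < η) (hδ : 0 < δ) (hμ : 0 < μ)
    (hγ : σ ^ 2 * δ ^ 2 / (2 * η ^ 2) < γ)
    (hbγ : 0 < bγ) (hbeq : g1 σ η δ bγ = f1 σ η δ γ) :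
    MonotoneOn (vGammaB σ η δ γ bγ) (Set.Ioi 0) ∧
    ConcaveOn ℝ (Set.Ioi 0) (vGammaB σ η δ γ bγ) ∧
    deriv (vGammaB σ η δ γ bγ) bγ = 1 ∧
    AntitoneOn (fun x =>
      deriv (vGammaB σ η δ γ bγ) x / deriv (deriv (vGammaB σ η δ γ bγ)) x) (Set.Ioi 0) ∧
    Tendsto (fun x =>
        deriv (vGammaB σ η δ γ bγ) x / deriv (deriv (vGammaB σ η δ γ bγ)) x)
      (nhdsWithin 0 (Set.Ioi 0)) (nhds (-σ ^ 2 / (2 * η))) ∧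
    (2 * η ≤ μ → ∀ x : ℝ, 0 < x →
      sSup ((fun p : ℝ × ℝ =>
          1 / 2 * σ ^ 2 * p.1 ^ 2 * deriv (deriv (vGammaB σ η δ γ bγ)) x +
            (η - (1 - p.1) * μ) * deriv (vGammaB σ η δ γ bγ) x -
            δ * vGammaB σ η δ γ bγ x +
            γ * (p.2 + vGammaB σ η δ γ bγ (x - p.2) - vGammaB σ η δ γ bγ x)) ''
        (Set.Icc 0 1 ×ˢ Set.Icc 0 x)) = 0) := by
  have hγ0 : 0 < γ := lt_trans (by positivity) hγ
  have e1 := deriv_vGammaB hσ hη hδ hγ0 hbγ hbeq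
  have e3 : deriv (dv σ η δ γ bγ) = ddv σ η δ γ bγ :=
    funext fun x => (hasDerivAt_dv hσ hη hδ hγ0 hbγ hbeq x).deriv
  refine ⟨((vGammaB_strictMono hσ hη hδ hγ0 hbγ hbeq).monotone).monotoneOn _,
    vGammaB_concave hσ hη hδ hγ0 hbγ hbeq, ?_, ?_, ?_, ?_⟩
  · rw [e1]
    exact dv_at_b hσ hη hδ hγ0 hbγ hbeq
  · simp only [e1, e3]
    exact Rf_antitone hσ hη hδ hγ0 hbγ hbeq
  · simp only [e1, e3]
    exact Rf_tendsto hσ hη hδ hγ0 hbγ hbeq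
  · intro hμ2 x hx
    simp only [e1, e3]
    exact (isGreatest_zero hσ hη hδ hγ0 hbγ hbeq hμ2 x hx).csSup_eq
end

section
/- Let v : [0,∞) → ℝ be continuously differentiable, increasing and concave, and suppose b := inf{x > 0 : v'(x) < 1} is finite. Then for every x > 0: if x ≤ b then the supremum over ξ ∈ [0,x] of (ξ + v(x−ξ) − v(x)) equals 0, and if x > b then this supremum equals x − b + v(b) − v(x). -/
open Real Filter Set

theorem sup_payout_barrier (v : ℝ → ℝ) (b : ℝ)
    (hC1 : ContDiffOn ℝ 1 v (Set.Ici 0))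
    (hmono : MonotoneOn v (Set.Ici 0))
    (hconc : ConcaveOn ℝ (Set.Ici 0) v)
    (hbdef : b = sInf {x : ℝ | 0 < x ∧ deriv v x < 1})
    (hbne : {x : ℝ | 0 < x ∧ deriv v x < 1}.Nonempty) :
    ∀ x : ℝ, 0 < x →
      (x ≤ b → sSup ((fun ξ => ξ + v (x - ξ) - v x) '' Set.Icc 0 x) = 0) ∧
      (b < x → sSup ((fun ξ => ξ + v (x - ξ) - v x) '' Set.Icc 0 x) = x - b + v b - v x) := by
  set S : Set ℝ := {x : ℝ | 0 < x ∧ deriv v x < 1} with hS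
  have hdiff : ∀ t : ℝ, 0 < t → DifferentiableAt ℝ v t := fun t ht =>
    (hC1.differentiableOn one_ne_zero).differentiableAt (Ici_mem_nhds ht)
  have hcont : ContinuousOn v (Set.Ici 0) := hC1.continuousOn
  have hb0 : 0 ≤ b := hbdef ▸ le_csInf hbne (fun y hy => hy.1.le)
  have hbdd : BddBelow S := ⟨0, fun y hy => hy.1.le⟩
  -- below b, deriv v ≥ 1
  have hA : ∀ t : ℝ, 0 < t → t < b → 1 ≤ deriv v t := by
    intro t ht htb
    by_contra h
    have : t ∈ S := ⟨ht, lt_of_not_ge h⟩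
    have : b ≤ t := hbdef ▸ csInf_le hbdd this
    linarith
  -- deriv v is antitone on (0,∞)
  have hanti : AntitoneOn (deriv v) (Set.Ioi 0) :=
    (hconc.subset (Ioi_subset_Ici le_rfl) (convex_Ioi 0)).antitoneOn_deriv
      (fun t ht => hdiff t ht)
  -- above b, deriv v < 1
  have hB : ∀ t : ℝ, b < t → deriv v t < 1 := by
    intro t ht
    obtain ⟨y, hy, hyt⟩ := exists_lt_of_csInf_lt hbne (hbdef ▸ ht)
    exact lt_of_le_of_lt (hanti hy.1 (show t ∈ Set.Ioi 0 by exact lt_of_le_of_lt hb0 ht)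
      hyt.le) hy.2
  set w : ℝ → ℝ := fun t => v t - t with hw
  have hwderiv : ∀ t : ℝ, 0 < t → deriv w t = deriv v t - 1 := by
    intro t ht
    exact ((hdiff t ht).hasDerivAt.sub (hasDerivAt_id t)).deriv
  have hwcont : ContinuousOn w (Set.Ici 0) := hcont.sub continuousOn_id
  have hwmono : MonotoneOn w (Set.Icc 0 b) := by
    apply monotoneOn_of_deriv_nonneg (convex_Icc 0 b) (hwcont.mono Icc_subset_Ici_self)
    · intro t ht
      rw [interior_Icc] at ht
      exact ((hdiff t ht.1).sub (differentiableAt_id)).differentiableWithinAt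
    · intro t ht
      rw [interior_Icc] at ht
      rw [hwderiv t ht.1]
      linarith [hA t ht.1 ht.2]
  have hwanti : AntitoneOn w (Set.Ici b) := by
    apply antitoneOn_of_deriv_nonpos (convex_Ici b) (hwcont.mono (Ici_subset_Ici.2 hb0))
    · intro t ht
      rw [interior_Ici] at ht
      exact ((hdiff t (lt_of_le_of_lt hb0 ht)).sub
        (differentiableAt_id)).differentiableWithinAt
    · intro t ht
      rw [interior_Ici] at ht
      rw [hwderiv t (lt_of_le_of_lt hb0 ht)]
      linarith [hB t ht]
  intro x hx
  constructor
  · intro hxb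
    have hgreat : IsGreatest ((fun ξ => ξ + v (x - ξ) - v x) '' Set.Icc 0 x) 0 := by
      constructor
      · exact ⟨0, ⟨le_rfl, hx.le⟩, by simp⟩
      · rintro a ⟨ξ, ⟨hξ0, hξx⟩, rfl⟩
        have hmem1 : x - ξ ∈ Set.Icc 0 b := ⟨by linarith, by linarith⟩
        have hmem2 : x ∈ Set.Icc 0 b := ⟨hx.le, hxb⟩
        have := hwmono hmem1 hmem2 (by linarith)
        simp only [hw] at this
        dsimp only
        linarith
    exact hgreat.csSup_eq
  · intro hbx
    have hgreat : IsGreatest ((fun ξ => ξ + v (x - ξ) - v x) '' Set.Icc 0 x)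
        (x - b + v b - v x) := by
      constructor
      · refine ⟨x - b, ⟨by linarith, by linarith⟩, ?_⟩
        show x - b + v (x - (x - b)) - v x = x - b + v b - v x
        rw [show x - (x - b) = b from by ring]
      · rintro a ⟨ξ, ⟨hξ0, hξx⟩, rfl⟩
        dsimp only
        rcases le_total (x - ξ) b with h | h
        · have := hwmono ⟨by linarith, h⟩ ⟨hb0, le_rfl⟩ h
          simp only [hw] at this
          linarith
        · have := hwanti (self_mem_Ici) h h
          simp only [hw] at this
          linarith
    exact hgreat.csSup_eq
end

section
/- The function g₂(b) = h₂(b)/h₂'(b) is increasing on (0,∞), satisfies lim_{b↓0} g₂(b) = (2η−μ)/(2δ), and lim_{b↑∞} g₂(b) = 1/θ₊. -/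
open Real Filter Set

/-- a₁ = 1 − θ₋(2η−μ)/(2δ). -/
noncomputable def a1 (σ η δ μ : ℝ) : ℝ := 1 - thetaM σ η δ * (2 * η - μ) / (2 * δ)

/-- a₂ = 1 − θ₊(2η−μ)/(2δ). -/
noncomputable def a2 (σ η δ μ : ℝ) : ℝ := 1 - thetaP σ η δ * (2 * η - μ) / (2 * δ)

/-- h₂(x) = (a₁e^{θ₊x} − a₂e^{θ₋x})/(θ₊ − θ₋). -/
noncomputable def h2 (σ η δ μ : ℝ) (x : ℝ) : ℝ :=
  (a1 σ η δ μ * Real.exp (thetaP σ η δ * x) - a2 σ η δ μ * Real.exp (thetaM σ η δ * x)) /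
    (thetaP σ η δ - thetaM σ η δ)

/-- h₂'(x). -/
noncomputable def h2' (σ η δ μ : ℝ) (x : ℝ) : ℝ :=
  (a1 σ η δ μ * thetaP σ η δ * Real.exp (thetaP σ η δ * x) -
      a2 σ η δ μ * thetaM σ η δ * Real.exp (thetaM σ η δ * x)) /
    (thetaP σ η δ - thetaM σ η δ)

/-- g₂(b) = h₂(b)/h₂'(b). -/
noncomputable def g2 (σ η δ μ : ℝ) (b : ℝ) : ℝ := h2 σ η δ μ b / h2' σ η δ μ b


lemma aux_mono (p m A B : ℝ) (hp : 0 < p) (hm : m < 0) (hA : 0 < A) (hB : 0 < B) :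
    StrictMono (fun b => (A * Real.exp (p * b) - B * Real.exp (m * b)) /
      (A * p * Real.exp (p * b) - B * m * Real.exp (m * b))) := by
  have hv : ∀ b : ℝ, 0 < A * p * Real.exp (p * b) - B * m * Real.exp (m * b) := by
    intro b
    have h1 : 0 < A * p * Real.exp (p * b) := by positivity
    have h2 : B * m * Real.exp (m * b) < 0 :=
      mul_neg_of_neg_of_pos (mul_neg_of_pos_of_neg hB hm) (Real.exp_pos _)
    linarith
  apply strictMono_of_deriv_pos
  intro x
  have he1 : HasDerivAt (fun b : ℝ => Real.exp (p * b)) (Real.exp (p * x) * p) x :=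
    by simpa using ((hasDerivAt_id x).const_mul p).exp
  have he2 : HasDerivAt (fun b : ℝ => Real.exp (m * b)) (Real.exp (m * x) * m) x :=
    by simpa using ((hasDerivAt_id x).const_mul m).exp
  have hu : HasDerivAt (fun b => A * Real.exp (p * b) - B * Real.exp (m * b))
      (A * p * Real.exp (p * x) - B * m * Real.exp (m * x)) x := by
    have := (he1.const_mul A).sub (he2.const_mul B)
    exact this.congr_deriv (by ring)
  have hw : HasDerivAt (fun b => A * p * Real.exp (p * b) - B * m * Real.exp (m * b))
      (A * p * p * Real.exp (p * x) - B * m * m * Real.exp (m * x)) x := by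
    have := (he1.const_mul (A * p)).sub (he2.const_mul (B * m))
    exact this.congr_deriv (by ring)
  have hd := hu.div hw (ne_of_gt (hv x))
  rw [show (fun b => (A * Real.exp (p * b) - B * Real.exp (m * b)) / (A * p * Real.exp (p * b) - B * m * Real.exp (m * b))) = (fun b => A * Real.exp (p * b) - B * Real.exp (m * b)) / (fun b => A * p * Real.exp (p * b) - B * m * Real.exp (m * b)) from rfl, hd.deriv]
  have hnum : (A * p * Real.exp (p * x) - B * m * Real.exp (m * x)) *
      (A * p * Real.exp (p * x) - B * m * Real.exp (m * x)) -
      (A * Real.exp (p * x) - B * Real.exp (m * x)) *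
      (A * p * p * Real.exp (p * x) - B * m * m * Real.exp (m * x)) =
      A * B * Real.exp (p * x) * Real.exp (m * x) * (p - m) ^ 2 := by ring
  rw [hnum]
  have hpm : 0 < p - m := by linarith
  exact div_pos (mul_pos (mul_pos (mul_pos (mul_pos hA hB) (Real.exp_pos _))
    (Real.exp_pos _)) (pow_pos hpm 2)) (pow_pos (hv x) 2)

theorem g2_monotone_and_limits (σ η δ μ : ℝ)
    (hσ : 0 < σ) (hη : 0 < η) (hδ : 0 < δ) (hμ : 0 < μ) (hμ2 : μ < 2 * η) :
    MonotoneOn (g2 σ η δ μ) (Set.Ioi 0) ∧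
    Tendsto (g2 σ η δ μ) (nhdsWithin 0 (Set.Ioi 0)) (nhds ((2 * η - μ) / (2 * δ))) ∧
    Tendsto (g2 σ η δ μ) atTop (nhds (1 / thetaP σ η δ)) := by
  set p := thetaP σ η δ with hpdef
  set m := thetaM σ η δ with hmdef
  set A := a1 σ η δ μ with hAdef
  set B := a2 σ η δ μ with hBdef
  have hσ2 : (0:ℝ) < σ ^ 2 := by positivity
  have hsnn : (0:ℝ) ≤ η ^ 2 + 2 * σ ^ 2 * δ := by positivity
  have hs2 : Real.sqrt (η ^ 2 + 2 * σ ^ 2 * δ) ^ 2 = η ^ 2 + 2 * σ ^ 2 * δ :=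
    Real.sq_sqrt hsnn
  have hsη : η < Real.sqrt (η ^ 2 + 2 * σ ^ 2 * δ) := by
    nlinarith [Real.sqrt_nonneg (η ^ 2 + 2 * σ ^ 2 * δ)]
  have hp : 0 < p := by
    rw [hpdef, thetaP]; apply div_pos (by linarith) hσ2
  have hm : m < 0 := by
    rw [hmdef, thetaM]; apply div_neg_of_neg_of_pos (by nlinarith [Real.sqrt_nonneg (η ^ 2 + 2 * σ ^ 2 * δ)]) hσ2
  have hq : σ ^ 2 / 2 * p ^ 2 + η * p = δ := by
    rw [hpdef, thetaP]; field_simp; nlinarith [hs2, Real.sq_sqrt (show (0:ℝ) ≤ η ^ 2 + σ ^ 2 * 2 * δ by positivity)]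
  have hB0 : 0 < B := by
    rw [hBdef, a2]
    have h1 : p * (2 * η - μ) < 2 * δ := by nlinarith
    have h2 : p * (2 * η - μ) / (2 * δ) < 1 := (div_lt_one (by linarith)).mpr h1
    linarith
  have hA0 : 0 < A := by
    rw [hAdef, a1]
    have h1 : m * (2 * η - μ) / (2 * δ) < 0 :=
      div_neg_of_neg_of_pos (mul_neg_of_neg_of_pos hm (by linarith)) (by linarith)
    linarith
  have hpm : 0 < p - m := by linarith
  -- the key identities
  have hID1 : A - B = (p - m) * ((2 * η - μ) / (2 * δ)) := by
    rw [hAdef, hBdef, a1, a2]; ring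
  have hID2 : A * p - B * m = p - m := by
    rw [hAdef, hBdef, a1, a2]; field_simp; ring
  -- pointwise form of g2
  have hv : ∀ b : ℝ, 0 < A * p * Real.exp (p * b) - B * m * Real.exp (m * b) := by
    intro b
    have h1 : 0 < A * p * Real.exp (p * b) := by positivity
    have h2 : B * m * Real.exp (m * b) < 0 :=
      mul_neg_of_neg_of_pos (mul_neg_of_pos_of_neg hB0 hm) (Real.exp_pos _)
    linarith
  have hg : g2 σ η δ μ = fun b => (A * Real.exp (p * b) - B * Real.exp (m * b)) /
      (A * p * Real.exp (p * b) - B * m * Real.exp (m * b)) := by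
    funext b
    rw [g2, h2, h2', ← hpdef, ← hmdef, ← hAdef, ← hBdef]
    rw [div_div_div_eq]
    rw [div_eq_div_iff (ne_of_gt (mul_pos hpm (hv b))) (ne_of_gt (hv b))]
    ring
  rw [hg]
  refine ⟨((aux_mono p m A B hp hm hA0 hB0).monotone).monotoneOn _, ?_, ?_⟩
  · -- limit at 0+
    have hc : ContinuousAt (fun b => (A * Real.exp (p * b) - B * Real.exp (m * b)) /
        (A * p * Real.exp (p * b) - B * m * Real.exp (m * b))) 0 := by
      apply ContinuousAt.div
      · fun_prop
      · fun_prop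
      · exact ne_of_gt (hv 0)
    have h0 : (A * Real.exp (p * 0) - B * Real.exp (m * 0)) /
        (A * p * Real.exp (p * 0) - B * m * Real.exp (m * 0)) = (2 * η - μ) / (2 * δ) := by
      simp only [mul_zero, Real.exp_zero, mul_one]
      rw [hID1, hID2]
      exact mul_div_cancel_left₀ _ (ne_of_gt hpm)
    rw [← h0]
    exact hc.continuousWithinAt.tendsto
  · -- limit at infinity
    have hrw : (fun b => (A * Real.exp (p * b) - B * Real.exp (m * b)) /
        (A * p * Real.exp (p * b) - B * m * Real.exp (m * b))) =
        fun b => (A - B * Real.exp ((m - p) * b)) /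
          (A * p - B * m * Real.exp ((m - p) * b)) := by
      funext b
      rw [show (m - p) * b = m * b - p * b by ring, Real.exp_sub]
      have hden : A * p - B * m * (Real.exp (m * b) / Real.exp (p * b)) ≠ 0 := by
        have h1 : 0 < A * p := by positivity
        have h2 : B * m * (Real.exp (m * b) / Real.exp (p * b)) < 0 :=
          mul_neg_of_neg_of_pos (mul_neg_of_pos_of_neg hB0 hm) (by positivity)
        intro h; linarith
      rw [div_eq_div_iff (ne_of_gt (hv b)) hden]
      field_simp
    rw [hrw]
    have hexp : Tendsto (fun b : ℝ => Real.exp ((m - p) * b)) atTop (nhds 0) := by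
      apply Real.tendsto_exp_atBot.comp
      exact tendsto_id.const_mul_atTop_of_neg (by linarith)
    have hnum : Tendsto (fun b : ℝ => A - B * Real.exp ((m - p) * b)) atTop (nhds A) := by
      have := (hexp.const_mul B)
      simpa using tendsto_const_nhds.sub this
    have hden : Tendsto (fun b : ℝ => A * p - B * m * Real.exp ((m - p) * b)) atTop (nhds (A * p)) := by
      have := (hexp.const_mul (B * m))
      simpa using tendsto_const_nhds.sub this
    have hfin : A / (A * p) = 1 / p := by
      rw [hpdef]; field_simp
    rw [← hfin]
    exact hnum.div hden (by positivity)
end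

section
/- There exists a unique γ₁ > 0 with f₁(γ₁) = (2η−μ)/(2δ), and for every γ > γ₁ there exists a unique c > 0 such that g₂(c) = f₁(γ). -/
open Real Filter Set

set_option maxHeartbeats 1000000 in
theorem exists_unique_gamma1_and_barrier (σ η δ μ : ℝ)
    (hσ : 0 < σ) (hδ : 0 < δ) (hη : 0 < η) (hημ : η < μ) (hμ2 : μ < 2 * η) :
    ∃ γ₁ : ℝ, 0 < γ₁ ∧ f1 σ η δ γ₁ = (2 * η - μ) / (2 * δ) ∧
      (∀ γ : ℝ, 0 < γ → f1 σ η δ γ = (2 * η - μ) / (2 * δ) → γ = γ₁) ∧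
      (∀ γ : ℝ, γ₁ < γ → ∃! c : ℝ, 0 < c ∧ g2 σ η δ μ c = f1 σ η δ γ) := by
  have hσ2 : (0:ℝ) < σ ^ 2 := by positivity
  have hμ0 : 0 < μ := hη.trans hημ
  set s := Real.sqrt (η ^ 2 + 2 * σ ^ 2 * δ) with hs_def
  have hs_sq : s ^ 2 = η ^ 2 + 2 * σ ^ 2 * δ := Real.sq_sqrt (by positivity)
  have hs_nn : 0 ≤ s := Real.sqrt_nonneg _
  have hsη : η < s := by nlinarith
  have hs0 : 0 < s := hη.trans hsη
  set tP := thetaP σ η δ with htP_def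
  set tM := thetaM σ η δ with htM_def
  have htP : tP = (-η + s) / σ ^ 2 := rfl
  have htM : tM = (-η - s) / σ ^ 2 := rfl
  have htP0 : 0 < tP := by rw [htP]; apply div_pos (by linarith) hσ2
  have htM0 : tM < 0 := by rw [htM]; apply div_neg_of_neg_of_pos (by linarith) hσ2
  have hD : 0 < tP - tM := by linarith
  have htPinv : tP * ((η + s) / (2 * δ)) = 1 := by
    rw [htP]; field_simp; nlinarith
  set k := (2 * η - μ) / (2 * δ) with hk_def
  have hk0 : 0 < k := div_pos (by linarith) (by linarith)
  have hkP : tP * k < 1 := by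
    have h1 : k < (η + s) / (2 * δ) :=
      (div_lt_div_iff_of_pos_right (by linarith)).mpr (by linarith)
    calc tP * k < tP * ((η + s) / (2 * δ)) := by
          exact mul_lt_mul_of_pos_left h1 htP0
      _ = 1 := htPinv
  -- rewritten form of f1
  have hwd : ∀ γ : ℝ, 0 ≤ γ → 0 < η + Real.sqrt (η ^ 2 + 2 * σ ^ 2 * (δ + γ)) := by
    intro γ hγ
    have := Real.sqrt_nonneg (η ^ 2 + 2 * σ ^ 2 * (δ + γ))
    linarith
  have hf1 : ∀ γ : ℝ, 0 ≤ γ → f1 σ η δ γ =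
      η / δ - η / (δ + γ) - σ ^ 2 / (η + Real.sqrt (η ^ 2 + 2 * σ ^ 2 * (δ + γ))) := by
    intro γ hγ
    unfold f1
    have h1 : η * γ / (δ * (δ + γ)) = η / δ - η / (δ + γ) := by
      have h2 : δ + γ ≠ 0 := by linarith
      field_simp
      ring
    rw [h1]
  have hmono : StrictMonoOn (f1 σ η δ) (Ici 0) := by
    intro x hx y hy hxy
    simp only [mem_Ici] at hx hy
    rw [hf1 x hx, hf1 y hy]
    have h1 : η / (δ + y) < η / (δ + x) :=
      div_lt_div_of_pos_left hη (by linarith) (by linarith)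
    have h2 : Real.sqrt (η ^ 2 + 2 * σ ^ 2 * (δ + x)) <
        Real.sqrt (η ^ 2 + 2 * σ ^ 2 * (δ + y)) :=
      Real.sqrt_lt_sqrt (by positivity) (by nlinarith)
    have h3 : σ ^ 2 / (η + Real.sqrt (η ^ 2 + 2 * σ ^ 2 * (δ + y))) <
        σ ^ 2 / (η + Real.sqrt (η ^ 2 + 2 * σ ^ 2 * (δ + x))) :=
      div_lt_div_of_pos_left hσ2 (hwd x hx) (by linarith)
    linarith
  have hcont : ContinuousOn (f1 σ η δ) (Ici 0) := by
    unfold f1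
    apply ContinuousOn.sub
    · apply ContinuousOn.div (by fun_prop) (by fun_prop)
      intro x hx
      simp only [mem_Ici] at hx
      have : 0 < δ * (δ + x) := by nlinarith
      exact this.ne'
    · apply ContinuousOn.div (by fun_prop) (by fun_prop)
      intro x hx
      exact (hwd x hx).ne'
  set M := max (8 * δ * η / μ) (32 * δ ^ 2 * σ ^ 2 / μ ^ 2) with hM_def
  have hM0 : (0:ℝ) ≤ M := le_trans (by positivity) (le_max_left _ _)
  have hb1 : η / (δ + M) ≤ μ / (8 * δ) := by
    have h1 : 8 * δ * η / μ ≤ M := le_max_left _ _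
    have h2 : 8 * δ * η ≤ μ * M := by
      rw [div_le_iff₀ hμ0] at h1; linarith
    rw [div_le_div_iff₀ (by linarith) (by positivity)]
    nlinarith [mul_pos hμ0 hδ]
  have hb2 : σ ^ 2 / (η + Real.sqrt (η ^ 2 + 2 * σ ^ 2 * (δ + M))) ≤ μ / (8 * δ) := by
    have h1 : 32 * δ ^ 2 * σ ^ 2 / μ ^ 2 ≤ M := le_max_right _ _
    have h2 : 32 * δ ^ 2 * σ ^ 2 ≤ μ ^ 2 * M := by
      rw [div_le_iff₀ (by positivity)] at h1; linarith
    have hδM : (0:ℝ) ≤ δ + M := by linarith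
    have h3 : 8 * δ * σ ^ 2 / μ ≤ Real.sqrt (η ^ 2 + 2 * σ ^ 2 * (δ + M)) := by
      rw [Real.le_sqrt' (by positivity)]
      rw [div_pow, div_le_iff₀ (by positivity)]
      nlinarith [mul_le_mul_of_nonneg_left h2 hσ2.le, sq_nonneg η, sq_nonneg μ,
        mul_pos (mul_pos hμ0 hμ0) hσ2, mul_pos (mul_pos hμ0 hμ0) hδ,
        mul_pos hσ2 (mul_pos hμ0 hμ0), mul_pos hσ2 hδ]
    rw [div_le_div_iff₀ (hwd M hM0) (by positivity)]
    have h4 := mul_le_mul_of_nonneg_left h3 hμ0.le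
    have h4' : μ * (8 * δ * σ ^ 2 / μ) = 8 * δ * σ ^ 2 := by field_simp
    have h5 : 0 < μ * η := mul_pos hμ0 hη
    nlinarith [h4, h4', h5]
  have hf10 : f1 σ η δ 0 < k := by
    rw [hf1 0 le_rfl]
    have h1 : 0 < σ ^ 2 / (η + Real.sqrt (η ^ 2 + 2 * σ ^ 2 * (δ + 0))) :=
      div_pos hσ2 (hwd 0 le_rfl)
    have h2 : η / (δ + 0) = η / δ := by norm_num
    linarith [hk0, h2 ▸ le_refl (η / (δ + 0))]
  have hf1M : k ≤ f1 σ η δ M := by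
    rw [hf1 M hM0]
    have h1 : k + μ / (8 * δ) + μ / (8 * δ) = η / δ - μ / (4 * δ) := by
      rw [hk_def]; field_simp; ring
    have h2 : 0 < μ / (4 * δ) := by positivity
    linarith [hb1, hb2]
  obtain ⟨γ₁, hγ₁mem, hγ₁eq⟩ :=
    intermediate_value_Icc hM0 (hcont.mono Icc_subset_Ici_self) ⟨hf10.le, hf1M⟩
  have hγ₁pos : 0 < γ₁ := by
    rcases hγ₁mem.1.lt_or_eq with h | h
    · exact h
    · exfalso; rw [← h] at hγ₁eq; rw [hγ₁eq] at hf10; exact lt_irrefl _ hf10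
  have huniq : ∀ γ : ℝ, 0 < γ → f1 σ η δ γ = k → γ = γ₁ := by
    intro γ hγ hfγ
    exact hmono.injOn (mem_Ici.mpr hγ.le) (mem_Ici.mpr hγ₁pos.le) (by rw [hfγ, hγ₁eq])
  refine ⟨γ₁, hγ₁pos, hγ₁eq, huniq, ?_⟩
  intro γ hγγ₁
  set v := f1 σ η δ γ with hv_def
  have hγ0 : 0 < γ := hγ₁pos.trans hγγ₁
  have hvk : k < v := by
    rw [hv_def, ← hγ₁eq]
    exact hmono (mem_Ici.mpr hγ₁pos.le) (mem_Ici.mpr hγ0.le) hγγ₁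
  have hv0 : 0 < v := hk0.trans hvk
  have hvP : v * tP < 1 := by
    have hvlt : v < η / δ := by
      rw [hv_def, hf1 γ hγ0.le]
      have h1 : 0 < η / (δ + γ) := by positivity
      have h2 : 0 < σ ^ 2 / (η + Real.sqrt (η ^ 2 + 2 * σ ^ 2 * (δ + γ))) :=
        div_pos hσ2 (hwd γ hγ0.le)
      linarith
    have h3 : η / δ < (η + s) / (2 * δ) := by
      rw [div_lt_div_iff₀ hδ (by linarith)]; linarith [mul_pos hδ (sub_pos.mpr hsη)]
    calc v * tP < ((η + s) / (2 * δ)) * tP :=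
          mul_lt_mul_of_pos_right (hvlt.trans h3) htP0
      _ = 1 := by rw [mul_comm]; exact htPinv
  set A1 := a1 σ η δ μ with hA1_def
  set A2 := a2 σ η δ μ with hA2_def
  have hA1 : A1 = 1 - tM * k := by
    rw [hA1_def, a1, hk_def]; ring
  have hA2 : A2 = 1 - tP * k := by
    rw [hA2_def, a2, hk_def]; ring
  have hA1p : 0 < A1 := by rw [hA1]; linarith [mul_neg_of_neg_of_pos htM0 hk0]
  have hA2p : 0 < A2 := by rw [hA2]; linarith
  set A := A1 * (1 - v * tP) with hA_def
  set B := A2 * (1 - v * tM) with hB_def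
  have hAp : 0 < A := mul_pos hA1p (by linarith)
  have hBp : 0 < B := mul_pos hA2p (by linarith [mul_neg_of_pos_of_neg hv0 htM0])
  have hBA : A < B := by
    have h : B - A = (tP - tM) * (v - k) := by
      rw [hA_def, hB_def, hA1, hA2]; ring
    linarith [h, mul_pos hD (sub_pos.mpr hvk)]
  set c := Real.log (B / A) / (tP - tM) with hc_def
  have hc0 : 0 < c :=
    div_pos (Real.log_pos (by rw [lt_div_iff₀ hAp]; linarith)) hD
  have hlog : (tP - tM) * c = Real.log (B / A) := by
    rw [hc_def]; field_simp
  have h2'pos : ∀ x : ℝ, 0 < h2' σ η δ μ x := by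
    intro x
    unfold h2'
    apply div_pos ?_ hD
    have e1 : 0 < Real.exp (tP * x) := Real.exp_pos _
    have e2 : 0 < Real.exp (tM * x) := Real.exp_pos _
    linarith [mul_pos (mul_pos hA1p htP0) e1,
      mul_neg_of_neg_of_pos (mul_neg_of_pos_of_neg hA2p htM0) e2]
  have hkey : ∀ x : ℝ, h2 σ η δ μ x - v * h2' σ η δ μ x =
      (A * Real.exp (tP * x) - B * Real.exp (tM * x)) / (tP - tM) := by
    intro x
    unfold h2 h2'
    simp only [← htP_def, ← htM_def, ← hA1_def, ← hA2_def]
    rw [hA_def, hB_def]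
    field_simp
    ring
  have hiff : ∀ x : ℝ, (g2 σ η δ μ x = v ↔
      A * Real.exp (tP * x) = B * Real.exp (tM * x)) := by
    intro x
    unfold g2
    rw [div_eq_iff (h2'pos x).ne']
    constructor
    · intro h
      have h0 : h2 σ η δ μ x - v * h2' σ η δ μ x = 0 := by rw [h]; ring
      rw [hkey x] at h0
      have := (div_eq_zero_iff.mp h0).resolve_right hD.ne'
      linarith
    · intro h
      have h0 : (A * Real.exp (tP * x) - B * Real.exp (tM * x)) / (tP - tM) = 0 := by
        rw [h]; simp
      rw [← hkey x] at h0
      linarith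
  have hexp_iff : ∀ x : ℝ, (A * Real.exp (tP * x) = B * Real.exp (tM * x) ↔ x = c) := by
    intro x
    have e2 : (0:ℝ) < Real.exp (tM * x) := Real.exp_pos _
    constructor
    · intro h
      have h1 : Real.exp ((tP - tM) * x) = B / A := by
        rw [show (tP - tM) * x = tP * x - tM * x by ring, Real.exp_sub,
          div_eq_div_iff e2.ne' hAp.ne']
        linarith [h]
      have h2 : (tP - tM) * x = Real.log (B / A) := by
        rw [← Real.log_exp ((tP - tM) * x), h1]
      rw [← hlog] at h2
      exact mul_left_cancel₀ hD.ne' h2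
    · intro h
      subst h
      have h1 : Real.exp ((tP - tM) * c) = B / A := by
        rw [hlog, Real.exp_log (div_pos hBp hAp)]
      rw [show tP * c = (tP - tM) * c + tM * c by ring, Real.exp_add, h1]
      field_simp
  refine ⟨c, ⟨hc0, (hiff c).mpr ((hexp_iff c).mpr rfl)⟩, ?_⟩
  rintro x ⟨hx0, hxg⟩
  exact (hexp_iff x).mp ((hiff x).mp hxg)
end

section
/- For each γ > γ₀ := σ²δ²/(2η²) let b_γ be the unique positive solution of g₁(b_γ) = f₁(γ). Then the map γ ↦ b_γ is strictly increasing on (γ₀, ∞), lim_{γ↓γ₀} b_γ = 0, and lim_{γ↑∞} b_γ = b_∞ := (1/(θ₊ − θ₋))·ln((δ − ηθ₋)/(δ − ηθ₊)); in particular b_∞ > 0 is well-defined (since δ − ηθ₊ > 0) and satisfies g₁(b_∞) = η/δ. -/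
open Real Filter Set

/-- b_∞ = (1/(θ₊ − θ₋))·ln((δ − ηθ₋)/(δ − ηθ₊)). -/
noncomputable def bInfty (σ η δ : ℝ) : ℝ :=
  1 / (thetaP σ η δ - thetaM σ η δ) *
    Real.log ((δ - η * thetaM σ η δ) / (δ - η * thetaP σ η δ))

section Aux
variable {σ η δ : ℝ} (hσ : 0 < σ) (hη : 0 < η) (hδ : 0 < δ)
include hσ hη hδ

lemma sqrt_gt : η < Real.sqrt (η ^ 2 + 2 * σ ^ 2 * δ) := by
  have h : η ^ 2 < η ^ 2 + 2 * σ ^ 2 * δ := by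
    have : (0:ℝ) < 2 * σ ^ 2 * δ := by positivity
    linarith
  calc η = Real.sqrt (η ^ 2) := (Real.sqrt_sq hη.le).symm
  _ < _ := Real.sqrt_lt_sqrt (by positivity) h

lemma thetaP_pos : 0 < thetaP σ η δ := by
  have h := sqrt_gt hσ hη hδ
  unfold thetaP
  apply div_pos (by linarith) (by positivity)

lemma thetaM_neg : thetaM σ η δ < 0 := by
  have h := sqrt_gt hσ hη hδ
  have : 0 < Real.sqrt (η ^ 2 + 2 * σ ^ 2 * δ) := lt_trans hη h
  unfold thetaM
  apply div_neg_of_neg_of_pos <;> nlinarith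

lemma theta_sub_pos : 0 < thetaP σ η δ - thetaM σ η δ :=
  sub_pos.mpr (lt_trans (thetaM_neg hσ hη hδ) (thetaP_pos hσ hη hδ))

lemma h1'_pos (x : ℝ) : 0 < h1' σ η δ x := by
  have h1 := thetaP_pos hσ hη hδ
  have h2 := thetaM_neg hσ hη hδ
  have e1 := Real.exp_pos (thetaP σ η δ * x)
  have e2 := Real.exp_pos (thetaM σ η δ * x)
  unfold h1'; nlinarith

lemma delta_sub_pos : 0 < δ - η * thetaP σ η δ := by
  have hs := Real.sq_sqrt (by positivity : (0:ℝ) ≤ η ^ 2 + 2 * σ ^ 2 * δ)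
  have hsn := Real.sqrt_nonneg (η ^ 2 + 2 * σ ^ 2 * δ)
  have h2 : thetaP σ η δ = (-η + Real.sqrt (η ^ 2 + 2 * σ ^ 2 * δ)) / σ ^ 2 := rfl
  rw [h2, sub_pos, mul_div_assoc', div_lt_iff₀ (by positivity : (0:ℝ) < σ ^ 2)]
  nlinarith [mul_nonneg hη.le hsn, sq_nonneg (σ * δ), mul_pos (mul_pos hσ hσ) hδ,
    sq_nonneg (δ * σ ^ 2 + η ^ 2 - η * Real.sqrt (η ^ 2 + 2 * σ ^ 2 * δ))]

end Aux

noncomputable def Ginv (σ η δ : ℝ) (y : ℝ) : ℝ :=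
  (Real.log (1 - thetaM σ η δ * y) - Real.log (1 - thetaP σ η δ * y)) /
    (thetaP σ η δ - thetaM σ η δ)

section Aux2
variable {σ η δ : ℝ} (hσ : 0 < σ) (hη : 0 < η) (hδ : 0 < δ)
include hσ hη hδ

/-- From a positive solution of g1 x = y we extract bounds on y and the formula. -/
lemma sol_eq_Ginv {x y : ℝ} (hx : 0 < x) (hgy : g1 σ η δ x = y) :
    0 < y ∧ thetaP σ η δ * y < 1 ∧ x = Ginv σ η δ y := by
  set p := thetaP σ η δ with hp
  set m := thetaM σ η δ with hm
  have hppos : 0 < p := thetaP_pos hσ hη hδ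
  have hmneg : m < 0 := thetaM_neg hσ hη hδ
  have hd : 0 < h1' σ η δ x := h1'_pos hσ hη hδ x
  have hE : h1 σ η δ x = y * h1' σ η δ x := by
    rw [← hgy, g1, div_mul_eq_mul_div, mul_div_assoc, div_self hd.ne', mul_one]
  have hE2 : Real.exp (p * x) * (1 - y * p) = Real.exp (m * x) * (1 - y * m) := by
    have := hE
    unfold h1 h1' at this
    ring_nf
    ring_nf at this
    linarith
  have e1 := Real.exp_pos (p * x)
  have e2 := Real.exp_pos (m * x)
  have hexplt : Real.exp (m * x) < Real.exp (p * x) := by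
    apply Real.exp_lt_exp.mpr
    nlinarith
  -- 1 - y p > 0
  have hyp1 : 0 < 1 - y * p := by
    by_contra h
    push_neg at h
    have hy : 0 < y := by nlinarith
    have h2 : 0 < 1 - y * m := by nlinarith
    nlinarith
  have hym1 : 0 < 1 - y * m := by nlinarith
  have hypos : 0 < y := by
    by_contra h
    push_neg at h
    have t1 : 0 ≤ Real.exp (p * x) * (-(y * p)) := mul_nonneg e1.le (by nlinarith)
    have t2 : 0 ≤ Real.exp (m * x) * (y * m) := mul_nonneg e2.le (by nlinarith)
    nlinarith
  refine ⟨hypos, by nlinarith, ?_⟩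
  -- take logs
  have hlog : p * x + Real.log (1 - y * p) = m * x + Real.log (1 - y * m) := by
    have := congrArg Real.log hE2
    rwa [Real.log_mul e1.ne' hyp1.ne', Real.log_mul e2.ne' hym1.ne',
      Real.log_exp, Real.log_exp] at this
  have hpm : 0 < p - m := by linarith
  rw [Ginv, ← hp, ← hm, eq_div_iff hpm.ne']
  rw [mul_comm y p, mul_comm y m] at hlog
  linarith

lemma g1_Ginv {y : ℝ} (h1y : 0 < 1 - thetaP σ η δ * y) (h2y : 0 < 1 - thetaM σ η δ * y) :
    g1 σ η δ (Ginv σ η δ y) = y := by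
  set p := thetaP σ η δ with hp
  set m := thetaM σ η δ with hm
  set x := Ginv σ η δ y with hxdef
  have hpm : 0 < p - m := theta_sub_pos hσ hη hδ
  have hx : (p - m) * x = Real.log (1 - m * y) - Real.log (1 - p * y) := by
    rw [hxdef, Ginv, ← hp, ← hm]
    field_simp
  have key : Real.exp (p * x) * (1 - p * y) = Real.exp (m * x) * (1 - m * y) := by
    have h2 : Real.exp ((p - m) * x) = (1 - m * y) / (1 - p * y) := by
      rw [hx, Real.exp_sub, Real.exp_log h2y, Real.exp_log h1y]
    have h3 : Real.exp (p * x) = Real.exp (m * x) * Real.exp ((p - m) * x) := by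
      rw [← Real.exp_add]; ring_nf
    rw [h3, h2]
    field_simp
    exact div_self (by linarith : (0:ℝ) < 1 - y * p).ne'
  have hd : 0 < h1' σ η δ x := h1'_pos hσ hη hδ x
  have hE : h1 σ η δ x = y * h1' σ η δ x := by
    unfold h1 h1'
    rw [← hp, ← hm]
    nlinarith [key]
  rw [g1, hE, mul_div_assoc, div_self hd.ne', mul_one]

lemma Ginv_strictMono {y₁ y₂ : ℝ} (h0 : 0 ≤ y₁) (h12 : y₁ < y₂)
    (h2 : 0 < 1 - thetaP σ η δ * y₂) : Ginv σ η δ y₁ < Ginv σ η δ y₂ := by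
  set p := thetaP σ η δ with hp
  set m := thetaM σ η δ with hm
  have hppos : 0 < p := thetaP_pos hσ hη hδ
  have hmneg : m < 0 := thetaM_neg hσ hη hδ
  have h1 : 0 < 1 - p * y₁ := by nlinarith
  have h1m : 0 < 1 - m * y₁ := by nlinarith
  have h2m : 0 < 1 - m * y₂ := by nlinarith
  have hpm : 0 < p - m := by linarith
  rw [Ginv, Ginv, ← hp, ← hm, div_lt_div_iff_of_pos_right hpm,
    ← Real.log_div h1m.ne' h1.ne', ← Real.log_div h2m.ne' h2.ne']
  apply Real.log_lt_log (by positivity)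
  rw [div_lt_div_iff₀ h1 h2]
  nlinarith

end Aux2

section Aux3
variable {σ η δ : ℝ} (hσ : 0 < σ) (hη : 0 < η) (hδ : 0 < δ)
include hσ hη hδ

lemma f1_eq {γ : ℝ} (hγ : 0 ≤ γ) :
    f1 σ η δ γ = η / δ - η / (δ + γ) - σ ^ 2 / (η + Real.sqrt (η ^ 2 + 2 * σ ^ 2 * (δ + γ))) := by
  have h1 : (0:ℝ) < δ + γ := by linarith
  rw [f1]
  congr 1
  field_simp
  ring

lemma f1_gamma0 : f1 σ η δ (σ ^ 2 * δ ^ 2 / (2 * η ^ 2)) = 0 := by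
  have hsq : Real.sqrt (η ^ 2 + 2 * σ ^ 2 * (δ + σ ^ 2 * δ ^ 2 / (2 * η ^ 2)))
      = η + σ ^ 2 * δ / η := by
    rw [show η ^ 2 + 2 * σ ^ 2 * (δ + σ ^ 2 * δ ^ 2 / (2 * η ^ 2)) = (η + σ ^ 2 * δ / η) ^ 2 by
      field_simp; ring]
    exact Real.sqrt_sq (by positivity)
  rw [f1, hsq]
  have h1 : (0:ℝ) < δ + σ ^ 2 * δ ^ 2 / (2 * η ^ 2) := by positivity
  have h2 : (0:ℝ) < η + (η + σ ^ 2 * δ / η) := by positivity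
  field_simp
  ring

lemma f1_strictMono {γ₁ γ₂ : ℝ} (h0 : 0 ≤ γ₁) (h12 : γ₁ < γ₂) : f1 σ η δ γ₁ < f1 σ η δ γ₂ := by
  have h0' : (0:ℝ) ≤ γ₂ := by linarith
  rw [f1_eq hσ hη hδ h0, f1_eq hσ hη hδ h0']
  have hs1 : Real.sqrt (η ^ 2 + 2 * σ ^ 2 * (δ + γ₁)) <
      Real.sqrt (η ^ 2 + 2 * σ ^ 2 * (δ + γ₂)) := by
    apply Real.sqrt_lt_sqrt (by positivity)
    have : (0:ℝ) < σ ^ 2 := by positivity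
    nlinarith
  have hs1n := Real.sqrt_nonneg (η ^ 2 + 2 * σ ^ 2 * (δ + γ₁))
  have t1 : η / (δ + γ₂) < η / (δ + γ₁) :=
    div_lt_div_of_pos_left hη (by linarith) (by linarith)
  have t2 : σ ^ 2 / (η + Real.sqrt (η ^ 2 + 2 * σ ^ 2 * (δ + γ₂))) <
      σ ^ 2 / (η + Real.sqrt (η ^ 2 + 2 * σ ^ 2 * (δ + γ₁))) :=
    div_lt_div_of_pos_left (by positivity) (by linarith) (by linarith)
  linarith

lemma f1_continuousAt {γ : ℝ} (hγ : 0 ≤ γ) : ContinuousAt (f1 σ η δ) γ := by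
  have h1 : (0:ℝ) < δ + γ := by linarith
  apply ContinuousAt.sub
  · apply ContinuousAt.div (by fun_prop) (by fun_prop)
    positivity
  · apply ContinuousAt.div continuousAt_const
    · exact (continuousAt_const.add ((Real.continuous_sqrt.continuousAt).comp (by fun_prop)))
    · have := Real.sqrt_nonneg (η ^ 2 + 2 * σ ^ 2 * (δ + γ))
      positivity

omit hσ hη hδ in
lemma tendsto_sqrt_atTop' : Tendsto Real.sqrt atTop atTop :=
  tendsto_atTop_atTop.mpr fun M => ⟨max (M ^ 2) 0, fun x hx => by
    calc M ≤ |M| := le_abs_self M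
    _ = Real.sqrt (M ^ 2) := (Real.sqrt_sq_eq_abs M).symm
    _ ≤ Real.sqrt x := Real.sqrt_le_sqrt (le_trans (le_max_left _ _) hx)⟩

lemma f1_tendsto_atTop : Tendsto (f1 σ η δ) atTop (nhds (η / δ)) := by
  have hev : ∀ᶠ γ in atTop, η / δ - η / (δ + γ)
      - σ ^ 2 / (η + Real.sqrt (η ^ 2 + 2 * σ ^ 2 * (δ + γ))) = f1 σ η δ γ := by
    filter_upwards [eventually_ge_atTop 0] with γ hγ using (f1_eq hσ hη hδ hγ).symm
  have t1 : Tendsto (fun γ : ℝ => η / (δ + γ)) atTop (nhds 0) :=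
    Tendsto.div_atTop tendsto_const_nhds (tendsto_atTop_add_const_left _ δ tendsto_id)
  have hA : Tendsto (fun γ : ℝ => η ^ 2 + 2 * σ ^ 2 * (δ + γ)) atTop atTop := by
    apply tendsto_atTop_add_const_left
    exact Tendsto.const_mul_atTop (show (0:ℝ) < 2 * σ ^ 2 by positivity)
      (tendsto_atTop_add_const_left _ δ tendsto_id)
  have t2 : Tendsto (fun γ : ℝ => σ ^ 2 / (η + Real.sqrt (η ^ 2 + 2 * σ ^ 2 * (δ + γ))))
      atTop (nhds 0) :=
    Tendsto.div_atTop tendsto_const_nhds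
      (tendsto_atTop_add_const_left _ η (tendsto_sqrt_atTop'.comp hA))
  have h3 : Tendsto (fun γ : ℝ => η / δ - η / (δ + γ)
      - σ ^ 2 / (η + Real.sqrt (η ^ 2 + 2 * σ ^ 2 * (δ + γ)))) atTop
      (nhds (η / δ - 0 - 0)) :=
    ((tendsto_const_nhds (x := η / δ)).sub t1).sub t2
  rw [sub_zero, sub_zero] at h3
  exact Tendsto.congr' hev h3

end Aux3

section Aux4
variable {σ η δ : ℝ} (hσ : 0 < σ) (hη : 0 < η) (hδ : 0 < δ)
include hσ hη hδ

lemma Ginv_continuousAt {y : ℝ} (h1 : 1 - thetaP σ η δ * y ≠ 0)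
    (h2 : 1 - thetaM σ η δ * y ≠ 0) : ContinuousAt (Ginv σ η δ) y := by
  unfold Ginv
  apply ContinuousAt.div _ continuousAt_const (theta_sub_pos hσ hη hδ).ne'
  have c2 : ContinuousAt (fun z : ℝ => 1 - thetaM σ η δ * z) y := by fun_prop
  have c1 : ContinuousAt (fun z : ℝ => 1 - thetaP σ η δ * z) y := by fun_prop
  exact (ContinuousAt.comp (f := fun z : ℝ => 1 - thetaM σ η δ * z)
      (Real.continuousAt_log h2) c2).sub
    (ContinuousAt.comp (f := fun z : ℝ => 1 - thetaP σ η δ * z)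
      (Real.continuousAt_log h1) c1)

lemma Ginv_zero : Ginv σ η δ 0 = 0 := by simp [Ginv]

lemma one_sub_thetaP_eta_div_pos : 0 < 1 - thetaP σ η δ * (η / δ) := by
  have h := delta_sub_pos hσ hη hδ
  rw [show 1 - thetaP σ η δ * (η / δ) = (δ - η * thetaP σ η δ) / δ by field_simp]
  positivity

lemma one_sub_thetaM_eta_div_pos : 0 < 1 - thetaM σ η δ * (η / δ) := by
  have h := thetaM_neg hσ hη hδ
  have : 0 < η / δ := by positivity
  nlinarith

lemma Ginv_eta_div : Ginv σ η δ (η / δ) = bInfty σ η δ := by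
  have hp : 0 < δ - η * thetaP σ η δ := delta_sub_pos hσ hη hδ
  have hm : 0 < δ - η * thetaM σ η δ := by
    have := thetaM_neg hσ hη hδ; nlinarith
  rw [Ginv, bInfty,
    show 1 - thetaM σ η δ * (η / δ) = (δ - η * thetaM σ η δ) / δ by field_simp,
    show 1 - thetaP σ η δ * (η / δ) = (δ - η * thetaP σ η δ) / δ by field_simp,
    Real.log_div hm.ne' hδ.ne', Real.log_div hp.ne' hδ.ne', Real.log_div hm.ne' hp.ne']
  ring

end Aux4


theorem barrier_map_monotone_and_limits (σ η δ : ℝ) (b : ℝ → ℝ)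
    (hσ : 0 < σ) (hη : 0 < η) (hδ : 0 < δ)
    (hb : ∀ γ : ℝ, σ ^ 2 * δ ^ 2 / (2 * η ^ 2) < γ →
      0 < b γ ∧ g1 σ η δ (b γ) = f1 σ η δ γ) :
    StrictMonoOn b (Set.Ioi (σ ^ 2 * δ ^ 2 / (2 * η ^ 2))) ∧
    Tendsto b
      (nhdsWithin (σ ^ 2 * δ ^ 2 / (2 * η ^ 2)) (Set.Ioi (σ ^ 2 * δ ^ 2 / (2 * η ^ 2))))
      (nhds 0) ∧
    Tendsto b atTop (nhds (bInfty σ η δ)) ∧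
    0 < δ - η * thetaP σ η δ ∧
    0 < bInfty σ η δ ∧
    g1 σ η δ (bInfty σ η δ) = η / δ := by
  set γ₀ : ℝ := σ ^ 2 * δ ^ 2 / (2 * η ^ 2) with hγ₀def
  have hγ₀pos : 0 < γ₀ := by positivity
  have key : ∀ γ : ℝ, γ₀ < γ → 0 < f1 σ η δ γ ∧ thetaP σ η δ * f1 σ η δ γ < 1 ∧
      b γ = Ginv σ η δ (f1 σ η δ γ) := by
    intro γ hγ
    obtain ⟨hbpos, hbeq⟩ := hb γ hγ
    exact sol_eq_Ginv hσ hη hδ hbpos hbeq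
  have hmono : StrictMonoOn b (Set.Ioi γ₀) := by
    intro γ₁ h₁ γ₂ h₂ h12
    obtain ⟨hf1, _, he1⟩ := key γ₁ h₁
    obtain ⟨_, hf2b, he2⟩ := key γ₂ h₂
    rw [he1, he2]
    exact Ginv_strictMono hσ hη hδ hf1.le
      (f1_strictMono hσ hη hδ (le_of_lt (lt_trans hγ₀pos h₁)) h12) (by linarith)
  have hdp : 0 < δ - η * thetaP σ η δ := delta_sub_pos hσ hη hδ
  have hcont0 : ContinuousAt (fun γ => Ginv σ η δ (f1 σ η δ γ)) γ₀ := by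
    have hg : ContinuousAt (Ginv σ η δ) (f1 σ η δ γ₀) := by
      rw [f1_gamma0 hσ hη hδ]
      exact Ginv_continuousAt hσ hη hδ (by norm_num) (by norm_num)
    exact hg.comp (f1_continuousAt hσ hη hδ hγ₀pos.le)
  have hlim0 : Tendsto b (nhdsWithin γ₀ (Set.Ioi γ₀)) (nhds 0) := by
    have h1 : Tendsto (fun γ => Ginv σ η δ (f1 σ η δ γ)) (nhdsWithin γ₀ (Set.Ioi γ₀))
        (nhds 0) := by
      have h0 : Tendsto (fun γ => Ginv σ η δ (f1 σ η δ γ)) (nhdsWithin γ₀ (Set.Ioi γ₀))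
          (nhds (Ginv σ η δ (f1 σ η δ γ₀))) :=
        hcont0.tendsto.mono_left nhdsWithin_le_nhds
      rwa [f1_gamma0 hσ hη hδ, Ginv_zero hσ hη hδ] at h0
    apply Tendsto.congr' _ h1
    filter_upwards [self_mem_nhdsWithin] with γ hγ
    exact ((key γ hγ).2.2).symm
  have hlimtop : Tendsto b atTop (nhds (bInfty σ η δ)) := by
    have hc : ContinuousAt (Ginv σ η δ) (η / δ) :=
      Ginv_continuousAt hσ hη hδ (one_sub_thetaP_eta_div_pos hσ hη hδ).ne'
        (one_sub_thetaM_eta_div_pos hσ hη hδ).ne'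
    have h1 : Tendsto (fun γ => Ginv σ η δ (f1 σ η δ γ)) atTop (nhds (bInfty σ η δ)) := by
      have := hc.tendsto.comp (f1_tendsto_atTop hσ hη hδ)
      rwa [Function.comp_def, Ginv_eta_div hσ hη hδ] at this
    apply Tendsto.congr' _ h1
    filter_upwards [eventually_gt_atTop γ₀] with γ hγ
    exact ((key γ hγ).2.2).symm
  have hbInfty_pos : 0 < bInfty σ η δ := by
    rw [← Ginv_eta_div hσ hη hδ, ← Ginv_zero hσ hη hδ (σ := σ)]
    exact Ginv_strictMono hσ hη hδ le_rfl (by positivity)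
      (one_sub_thetaP_eta_div_pos hσ hη hδ)
  have hg1b : g1 σ η δ (bInfty σ η δ) = η / δ := by
    rw [← Ginv_eta_div hσ hη hδ]
    exact g1_Ginv hσ hη hδ (one_sub_thetaP_eta_div_pos hσ hη hδ)
      (one_sub_thetaM_eta_div_pos hσ hη hδ)
  exact ⟨hmono, hlim0, hlimtop, hdp, hbInfty_pos, hg1b⟩
end
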